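/- arXiv:1511.08407 — 4 statements merged into one kernel-verified Lean document; each statement's English description precedes it below -/
import Mathlib

section
/- Let λ < 1/2 and let F = F_λ. Let X be a random variable with values in (0,∞) having tail law (ξ,β) and satisfying E[F(X)²] < ∞. For p > 0 and a positive integer n, set Y_{p,n} := F(pX + 1/n) − F(pβ + 1/n). Then there exists a constant χ such that |E[Y_{p,n}]| ≤ χ·√(φ(p,n)) for all p > 0 and all positive integers n. -/
open MeasureTheory Real Filter Topology

/-- The transformation function `F_λ`. -/
noncomputable def Flam (lam : ℝ) (x : ℝ) : ℝ :=
  if lam = 0 then Real.log x else x ^ lam / lam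

/-- The weight `φ(p,n) = p^{2λ} (1 + (βnp)⁻¹)^{-1+2λ}`. -/
noncomputable def phiW (lam β : ℝ) (p : ℝ) (n : ℕ) : ℝ :=
  p ^ (2 * lam) * (1 + (β * n * p)⁻¹) ^ (-1 + 2 * lam)

open Set
open scoped ENNReal

lemma flam_hasDerivAt {lam z : ℝ} (hz : 0 < z) :
    HasDerivAt (Flam lam) (z ^ (lam - 1)) z := by
  rcases eq_or_ne lam 0 with h | h
  · have he : Flam lam = Real.log := by funext x; simp [Flam, h]
    rw [he, h]
    simpa [Real.rpow_neg_one, one_div] using Real.hasDerivAt_log hz.ne'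
  · have he : Flam lam = fun x => x ^ lam / lam := by funext x; simp [Flam, h]
    rw [he]
    have := (Real.hasDerivAt_rpow_const (x := z) (p := lam) (Or.inl hz.ne')).div_const lam
    exact this.congr_deriv (mul_div_cancel_left₀ _ h)

lemma flam_comp_measurable {lam : ℝ} {Ω : Type*} [MeasurableSpace Ω] {X : Ω → ℝ}
    (hX : Measurable X) (hXpos : ∀ ω, 0 < X ω) :
    Measurable fun ω => Flam lam (X ω) := by
  rcases eq_or_ne lam 0 with h | h
  · have he : (fun ω => Flam lam (X ω)) = fun ω => Real.log (X ω) := by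
      funext ω; simp [Flam, h]
    rw [he]; exact Real.measurable_log.comp hX
  · have he : (fun ω => Flam lam (X ω))
        = fun ω => Real.exp (Real.log (X ω) * lam) / lam := by
      funext ω; simp [Flam, h, Real.rpow_def_of_pos (hXpos ω)]
    rw [he]
    exact (Real.measurable_exp.comp ((Real.measurable_log.comp hX).mul_const lam)).div_const lam

lemma flam_mono {lam a b : ℝ} (ha : 0 < a) (hab : a ≤ b) : Flam lam a ≤ Flam lam b := by
  rcases lt_trichotomy lam 0 with h | h | h
  · simp only [Flam, if_neg h.ne]
    exact div_le_div_of_nonpos_of_le h.le (Real.rpow_le_rpow_of_nonpos ha hab h.le)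
  · simp only [Flam, if_pos h]
    exact Real.log_le_log ha hab
  · simp only [Flam, if_neg h.ne']
    exact div_le_div_of_nonneg_right (Real.rpow_le_rpow ha.le hab h.le) h.le

lemma flam_diff_le {lam : ℝ} (hl : lam < 1) {a h : ℝ} (ha : 0 < a) (hh : 0 ≤ h) :
    Flam lam (a + h) - Flam lam a ≤ h * a ^ (lam - 1) := by
  rcases eq_or_lt_of_le hh with rfl | hh'
  · simp
  · have hab : a < a + h := by linarith
    have hcont : ContinuousOn (Flam lam) (Icc a (a + h)) := fun x hx =>
      (flam_hasDerivAt (lt_of_lt_of_le ha hx.1)).continuousAt.continuousWithinAt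
    obtain ⟨c, hc, hceq⟩ := exists_hasDerivAt_eq_slope (Flam lam) (fun z => z ^ (lam - 1)) hab
      hcont (fun x hx => flam_hasDerivAt (lt_trans ha hx.1))
    have h1 : Flam lam (a + h) - Flam lam a = h * c ^ (lam - 1) := by
      have hne : a + h - a = h := by ring
      rw [hne] at hceq
      field_simp at hceq
      linarith [hceq]
    rw [h1]
    have : c ^ (lam - 1) ≤ a ^ (lam - 1) :=
      Real.rpow_le_rpow_of_nonpos ha hc.1.le (by linarith)
    exact mul_le_mul_of_nonneg_left this hh

lemma flam_FTC {lam p t c d : ℝ} (hp : 0 < p) (ht : 0 < t) (hc : 0 < c) (hcd : c ≤ d) :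
    ∫ y in c..d, ((p * y + t) ^ (lam - 1) * p)
      = Flam lam (p * d + t) - Flam lam (p * c + t) := by
  have huIcc : uIcc c d = Icc c d := uIcc_of_le hcd
  have hpos : ∀ x ∈ Icc c d, 0 < p * x + t := fun x hx => by nlinarith [hx.1]
  apply intervalIntegral.integral_eq_sub_of_hasDerivAt
  · intro x hx
    rw [huIcc] at hx
    have h1 : HasDerivAt (fun y : ℝ => p * y + t) p x := by
      simpa using ((hasDerivAt_id x).const_mul p).add_const t
    exact (flam_hasDerivAt (hpos x hx)).comp x h1
  · apply ContinuousOn.intervalIntegrable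
    apply ContinuousOn.mul _ continuousOn_const
    apply ContinuousOn.rpow_const
    · exact ((continuous_const.mul continuous_id).add continuous_const).continuousOn
    · intro x hx
      rw [huIcc] at hx
      exact Or.inl (hpos x hx).ne'

lemma sqrt_phiW {lam β p : ℝ} {n : ℕ} (hβ : 0 < β) (hp : 0 < p) (hn : 0 < n) :
    Real.sqrt (phiW lam β p n) = p ^ lam * (1 + (β * n * p)⁻¹) ^ (lam - 1/2) := by
  have hn' : (0:ℝ) < n := Nat.cast_pos.mpr hn
  have hq : (0:ℝ) < 1 + (β * n * p)⁻¹ := by positivity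
  have key : phiW lam β p n = (p ^ lam * (1 + (β * n * p)⁻¹) ^ (lam - 1/2))^2 := by
    rw [mul_pow, ← Real.rpow_natCast (p ^ lam) 2, ← Real.rpow_natCast ((1 + (β * n * p)⁻¹) ^ (lam - 1/2)) 2,
      ← Real.rpow_mul hp.le, ← Real.rpow_mul hq.le]
    norm_num [phiW]
    ring_nf
  rw [key, Real.sqrt_sq (by positivity)]

-- geometric mean ≤ sum
lemma gm_le_add {a b θ : ℝ} (ha : 0 < a) (hb : 0 < b) (hθ0 : 0 ≤ θ) (hθ1 : θ ≤ 1) :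
    a ^ θ * b ^ (1 - θ) ≤ a + b := by
  have h1 : a ^ θ * b ^ (1 - θ) ≤ (max a b) ^ θ * (max a b) ^ (1 - θ) :=
    mul_le_mul (Real.rpow_le_rpow ha.le (le_max_left a b) hθ0)
      (Real.rpow_le_rpow hb.le (le_max_right a b) (by linarith))
      (Real.rpow_nonneg hb.le _) (Real.rpow_nonneg (le_max_of_le_left ha.le) _)
  have h2 : (max a b) ^ θ * (max a b) ^ (1 - θ) = max a b := by
    rw [← Real.rpow_add (lt_max_of_lt_left ha)]
    norm_num
  rw [h2] at h1
  exact h1.trans (max_le (by linarith) (by linarith))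

section
variable {lam β p t x : ℝ}

noncomputable def Kneg (lam β : ℝ) : ℝ :=
  (2:ℝ) ^ ((1:ℝ)/2 - lam) * (β ^ lam + 1 + (if 0 < lam then (2:ℝ)^lam * β^lam / lam else 0))

lemma ite_nonneg_K (hβ : 0 < β) : (0:ℝ) ≤ (if 0 < lam then (2:ℝ)^lam * β^lam / lam else 0) := by
  split_ifs with h
  · positivity
  · exact le_rfl

lemma Kneg_nonneg (hβ : 0 < β) : 0 ≤ Kneg lam β := by
  unfold Kneg
  have h2 : (0:ℝ) < (2:ℝ) ^ ((1:ℝ)/2 - lam) := Real.rpow_pos_of_pos two_pos _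
  have h3 : (0:ℝ) ≤ β ^ lam := (Real.rpow_pos_of_pos hβ _).le
  have h4 := ite_nonneg_K (lam := lam) hβ
  exact mul_nonneg h2.le (by linarith)

set_option maxHeartbeats 1000000 in
lemma lemA (hlam : lam < 1/2) (hβ : 0 < β) (hp : 0 < p) (ht : 0 < t) (hx : 0 < x) :
    Flam lam (p*β+t) - Flam lam (p*x+t)
      ≤ Kneg lam β * (p ^ lam * (1+(p*β/t)⁻¹) ^ (lam - 1/2))
          * (1 + |Flam lam x| + |Flam lam β|) := by
  set s := p*β/t with hs_def
  have hs : 0 < s := by positivity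
  have hq : (0:ℝ) < 1 + s⁻¹ := by positivity
  set S := p ^ lam * (1+s⁻¹) ^ (lam - 1/2) with hS_def
  have hS : 0 < S := by positivity
  have hKn : 0 ≤ Kneg lam β := Kneg_nonneg hβ
  have hfac : (1:ℝ) ≤ 1 + |Flam lam x| + |Flam lam β| := by
    linarith [abs_nonneg (Flam lam x), abs_nonneg (Flam lam β)]
  have hc1 : (0:ℝ) < (2:ℝ) ^ ((1:ℝ)/2 - lam) := Real.rpow_pos_of_pos two_pos _
  set c1 := (2:ℝ) ^ ((1:ℝ)/2 - lam) with hc1_def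
  have hc1inv : c1 * (2:ℝ) ^ (lam - 1/2) = 1 := by
    rw [hc1_def, ← Real.rpow_add two_pos]
    norm_num
  have hite := ite_nonneg_K (lam := lam) hβ
  have hβl : (0:ℝ) < β ^ lam := Real.rpow_pos_of_pos hβ _
  rcases le_or_gt x β with hxβ | hβx
  · rcases le_total s 1 with hs1 | hs1
    · -- s ≤ 1
      have l1 : Flam lam t ≤ Flam lam (p*x+t) := flam_mono ht (by nlinarith)
      have l2 : Flam lam (p*β+t) - Flam lam t ≤ (p*β) * t^(lam-1) := by
        have := flam_diff_le (by linarith : lam < 1) ht (by positivity : (0:ℝ) ≤ p*β)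
        calc Flam lam (p*β+t) - Flam lam t = Flam lam (t + p*β) - Flam lam t := by ring_nf
          _ ≤ (p*β) * t^(lam-1) := this
      have l3 : (p*β) * t^(lam-1) = s * t^lam := by
        rw [Real.rpow_sub ht, Real.rpow_one, hs_def]
        field_simp
      have hq2 : (1+s⁻¹) ≤ 2/s := by
        have h1 : (1:ℝ) ≤ 1/s := by rw [le_div_iff₀ hs]; linarith
        have h2 : (2:ℝ)/s = 1/s + 1/s := by ring
        rw [h2, inv_eq_one_div]; linarith
      have hq3 : (2/s)^(lam-1/2) ≤ (1+s⁻¹)^(lam-1/2) :=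
        Real.rpow_le_rpow_of_nonpos hq hq2 (by linarith)
      have hq4 : (2/s)^(lam-1/2) = (2:ℝ)^(lam-1/2) * s^((1:ℝ)/2-lam) := by
        rw [Real.div_rpow (by norm_num) hs.le, div_eq_mul_inv, ← Real.rpow_neg hs.le]
        norm_num
      have hpval : p = s * t / β := by rw [hs_def]; field_simp
      have hplam : p ^ lam = s^lam * t^lam / β^lam := by
        rw [hpval, Real.div_rpow (by positivity) hβ.le, Real.mul_rpow hs.le ht.le]
      have hkey : s * t^lam ≤ c1 * β^lam * S := by
        have e1 : c1 * β^lam * (p^lam * ((2:ℝ)^(lam-1/2) * s^((1:ℝ)/2-lam)))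
            = s^lam * s^((1:ℝ)/2-lam) * t^lam := by
          calc c1 * β^lam * (p^lam * ((2:ℝ)^(lam-1/2) * s^((1:ℝ)/2-lam)))
              = (c1 * (2:ℝ)^(lam-1/2)) * ((s^lam*t^lam/β^lam)*β^lam) * s^((1:ℝ)/2-lam) := by
                rw [hplam]; ring
            _ = s^lam * s^((1:ℝ)/2-lam) * t^lam := by
                rw [hc1inv, div_mul_cancel₀ _ hβl.ne']; ring
        have e2 : s^lam * s^((1:ℝ)/2-lam) = s^((1:ℝ)/2) := by
          rw [← Real.rpow_add hs]; norm_num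
        have e3 : s ≤ s^((1:ℝ)/2) := by
          nth_rewrite 1 [← Real.rpow_one s]
          exact Real.rpow_le_rpow_of_exponent_ge hs hs1 (by norm_num)
        have e4 : c1 * β^lam * (p^lam * ((2:ℝ)^(lam-1/2) * s^((1:ℝ)/2-lam))) ≤ c1 * β^lam * S := by
          apply mul_le_mul_of_nonneg_left _ (by positivity)
          apply mul_le_mul_of_nonneg_left _ (by positivity)
          calc (2:ℝ)^(lam-1/2) * s^((1:ℝ)/2-lam) = (2/s)^(lam-1/2) := hq4.symm
            _ ≤ (1+s⁻¹)^(lam-1/2) := hq3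
        calc s * t^lam ≤ s^((1:ℝ)/2) * t^lam :=
              mul_le_mul_of_nonneg_right e3 (by positivity)
          _ = s^lam * s^((1:ℝ)/2-lam) * t^lam := by rw [e2]
          _ = c1 * β^lam * (p^lam * ((2:ℝ)^(lam-1/2) * s^((1:ℝ)/2-lam))) := e1.symm
          _ ≤ c1 * β^lam * S := e4
      have hKS : c1 * β^lam * S ≤ Kneg lam β * S * (1 + |Flam lam x| + |Flam lam β|) := by
        have h1 : c1 * β^lam ≤ Kneg lam β := by
          unfold Kneg
          rw [← hc1_def]
          nlinarith [hite, hc1]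
        have h2 : c1 * β^lam * S ≤ Kneg lam β * S := mul_le_mul_of_nonneg_right h1 hS.le
        have h3 : Kneg lam β * S * 1 ≤ Kneg lam β * S * (1 + |Flam lam x| + |Flam lam β|) :=
          mul_le_mul_of_nonneg_left hfac (by positivity)
        linarith
      calc Flam lam (p*β+t) - Flam lam (p*x+t) ≤ Flam lam (p*β+t) - Flam lam t := by linarith
        _ ≤ (p*β) * t^(lam-1) := l2
        _ = s * t^lam := l3
        _ ≤ c1 * β^lam * S := hkey
        _ ≤ _ := hKS
    · -- 1 ≤ s
      have hps : p^lam ≤ c1 * S := by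
        have h1 : (1+s⁻¹) ≤ 2 := by
          have : s⁻¹ ≤ 1 := inv_le_one_of_one_le₀ hs1
          linarith
        have h2 : (2:ℝ)^(lam-1/2) ≤ (1+s⁻¹)^(lam-1/2) :=
          Real.rpow_le_rpow_of_nonpos hq h1 (by linarith)
        calc p^lam = p^lam * (c1 * (2:ℝ)^(lam-1/2)) := by rw [hc1inv, mul_one]
          _ ≤ p^lam * (c1 * (1+s⁻¹)^(lam-1/2)) := by
              apply mul_le_mul_of_nonneg_left _ (Real.rpow_pos_of_pos hp _).le
              exact mul_le_mul_of_nonneg_left h2 hc1.le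
          _ = c1 * S := by rw [hS_def]; ring
      have hts : t ≤ p*β := by
        rw [hs_def] at hs1
        rw [le_div_iff₀ ht] at hs1
        linarith
      rcases lt_trichotomy lam 0 with hl | hl | hl
      · -- lam < 0
        have hFβ : Flam lam (p*β+t) ≤ 0 := by
          simp only [Flam, if_neg hl.ne]
          exact div_nonpos_of_nonneg_of_nonpos (Real.rpow_pos_of_pos (by positivity) _).le hl.le
        have hFx : - Flam lam (p*x+t) ≤ p ^ lam * |Flam lam x| := by
          have h1 : (p*x+t)^lam ≤ (p*x)^lam :=
            Real.rpow_le_rpow_of_nonpos (by positivity) (by linarith) hl.le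
          have h2 : (p*x)^lam = p^lam * x^lam := Real.mul_rpow hp.le hx.le
          have h3 : |Flam lam x| = x^lam / (-lam) := by
            simp only [Flam, if_neg hl.ne]
            rw [abs_of_nonpos (div_nonpos_of_nonneg_of_nonpos (Real.rpow_pos_of_pos hx _).le hl.le)]
            ring
          rw [h3]
          simp only [Flam, if_neg hl.ne]
          have hinv : (0:ℝ) < (-lam)⁻¹ := by rw [inv_pos]; linarith
          calc -((p*x+t)^lam / lam) = (p*x+t)^lam * (-lam)⁻¹ := by
                rw [← div_eq_mul_inv]; ring
            _ ≤ (p*x)^lam * (-lam)⁻¹ := mul_le_mul_of_nonneg_right h1 hinv.le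
            _ = p ^ lam * (x^lam / (-lam)) := by rw [h2]; ring
        have hKc : c1 ≤ Kneg lam β := by
          unfold Kneg; rw [← hc1_def]; nlinarith [hβl, hite, hc1]
        have habs : (0:ℝ) ≤ |Flam lam x| := abs_nonneg _
        have step : p^lam * |Flam lam x| ≤ Kneg lam β * S * (1 + |Flam lam x| + |Flam lam β|) := by
          have h4 : p^lam * |Flam lam x| ≤ (c1 * S) * |Flam lam x| :=
            mul_le_mul_of_nonneg_right hps habs
          have h5 : (c1 * S) * |Flam lam x| ≤ (Kneg lam β * S) * (1 + |Flam lam x| + |Flam lam β|) := by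
            apply mul_le_mul (mul_le_mul_of_nonneg_right hKc hS.le)
              (by linarith [abs_nonneg (Flam lam β)]) habs (by positivity)
          linarith
        linarith [hFβ, hFx, step]
      · -- lam = 0
        have hlog : Flam lam (p*β+t) - Flam lam (p*x+t) ≤ |Flam lam x| + |Flam lam β| := by
          simp only [Flam, if_pos hl]
          have hm : (p*β+t)*x ≤ β*(p*x+t) := by nlinarith
          have h2 : Real.log ((p*β+t)*x) ≤ Real.log (β*(p*x+t)) :=
            Real.log_le_log (by positivity) hm
          rw [Real.log_mul (by positivity) hx.ne', Real.log_mul hβ.ne' (by positivity)] at h2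
          have h3 := le_abs_self (Real.log β)
          have h4 := neg_abs_le (Real.log x)
          linarith
        have h1S : 1 ≤ c1 * S := by
          have hpz : p ^ lam = 1 := by rw [hl, Real.rpow_zero]
          rw [hpz] at hps
          exact hps
        have hKc : c1 ≤ Kneg lam β := by
          unfold Kneg; rw [← hc1_def]; nlinarith [hβl, hite, hc1]
        have step : |Flam lam x| + |Flam lam β| ≤ Kneg lam β * S * (1 + |Flam lam x| + |Flam lam β|) := by
          have h6 : (1:ℝ) * (|Flam lam x| + |Flam lam β|) ≤ (c1*S) * (1 + |Flam lam x| + |Flam lam β|) := by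
            apply mul_le_mul h1S (by linarith [abs_nonneg (Flam lam x), abs_nonneg (Flam lam β)])
              (by positivity) (by positivity)
          have h7 : (c1*S) * (1 + |Flam lam x| + |Flam lam β|)
              ≤ (Kneg lam β * S) * (1 + |Flam lam x| + |Flam lam β|) :=
            mul_le_mul_of_nonneg_right (mul_le_mul_of_nonneg_right hKc hS.le) (by positivity)
          linarith
        linarith [hlog, step]
      · -- 0 < lam
        have hFx0 : 0 ≤ Flam lam (p*x+t) := by
          simp only [Flam, if_neg hl.ne']
          positivity
        have hA : (0:ℝ) ≤ (2:ℝ)^lam*β^lam/lam := by positivity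
        have hFb : Flam lam (p*β+t) ≤ ((2:ℝ)^lam * β^lam / lam) * p^lam := by
          simp only [Flam, if_neg hl.ne']
          have h1 : (p*β+t)^lam ≤ (2*(p*β))^lam :=
            Real.rpow_le_rpow (by positivity) (by linarith) hl.le
          have h2 : (2*(p*β))^lam = (2:ℝ)^lam * (p^lam * β^lam) := by
            rw [Real.mul_rpow (by norm_num) (by positivity), Real.mul_rpow hp.le hβ.le]
          calc (p*β+t)^lam / lam ≤ ((2:ℝ)^lam * (p^lam * β^lam)) / lam :=
                div_le_div_of_nonneg_right (h1.trans_eq h2) hl.le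
            _ = ((2:ℝ)^lam * β^lam / lam) * p^lam := by ring
        have hKA : ((2:ℝ)^lam * β^lam / lam) * c1 ≤ Kneg lam β := by
          unfold Kneg; rw [← hc1_def, if_pos hl]
          nlinarith [hβl, hc1]
        have step1 : Flam lam (p*β+t) ≤ ((2:ℝ)^lam * β^lam / lam) * (c1*S) :=
          hFb.trans (mul_le_mul_of_nonneg_left hps hA)
        have step2 : ((2:ℝ)^lam * β^lam / lam) * (c1*S) ≤ Kneg lam β * S := by
          calc ((2:ℝ)^lam * β^lam / lam) * (c1*S) = (((2:ℝ)^lam * β^lam / lam) * c1) * S := by ring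
            _ ≤ Kneg lam β * S := mul_le_mul_of_nonneg_right hKA hS.le
        have step3 : Kneg lam β * S * 1 ≤ Kneg lam β * S * (1 + |Flam lam x| + |Flam lam β|) :=
          mul_le_mul_of_nonneg_left hfac (by positivity)
        linarith
  · -- β < x
    have h1 : Flam lam (p*β+t) ≤ Flam lam (p*x+t) :=
      flam_mono (by positivity) (by nlinarith)
    have h2 : (0:ℝ) ≤ Kneg lam β * S * (1 + |Flam lam x| + |Flam lam β|) :=
      mul_nonneg (mul_nonneg hKn hS.le) (by positivity)
    linarith
end

noncomputable def Ctail (lam β : ℝ) : ℝ :=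
  (2:ℝ) ^ ((1:ℝ)/2 - lam) * β ^ (lam-1) * (1/(1-lam) + 2)

section
variable {lam β p t ξ : ℝ}

set_option maxHeartbeats 1000000 in
lemma tail_bound (hlam : lam < 1/2) (hβ : 0 < β) (hp : 0 < p) (ht : 0 < t) (hξ : 0 < ξ) :
    ∫⁻ y in Ioi β, ENNReal.ofReal ((p*y+t)^(lam-1) * p * (ξ/y))
      ≤ ENNReal.ofReal (ξ * Ctail lam β * (p ^ lam * (1+(p*β/t)⁻¹) ^ (lam - 1/2))) := by
  set s := p*β/t with hs_def
  have hs : 0 < s := by positivity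
  have hq : (0:ℝ) < 1 + s⁻¹ := by positivity
  set S := p ^ lam * (1+s⁻¹) ^ (lam - 1/2) with hS_def
  have hS : 0 < S := by positivity
  have hc1 : (0:ℝ) < (2:ℝ) ^ ((1:ℝ)/2 - lam) := Real.rpow_pos_of_pos two_pos _
  set c1 := (2:ℝ) ^ ((1:ℝ)/2 - lam) with hc1_def
  have hc1inv : c1 * (2:ℝ) ^ (lam - 1/2) = 1 := by
    rw [hc1_def, ← Real.rpow_add two_pos]; norm_num
  have hβl1 : (0:ℝ) < β ^ (lam-1) := Real.rpow_pos_of_pos hβ _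
  have h1lam : (0:ℝ) < 1 - lam := by linarith
  rcases le_total s 1 with hs1 | hs1
  · -- s ≤ 1 case
    set c := ξ * (p^((1:ℝ)/2) * t^(lam-1/2)) with hc_def
    have hcpos : 0 < c := by positivity
    have hpt : ∀ y ∈ Ioi β, (p*y+t)^(lam-1) * p * (ξ/y) ≤ c * y ^ (-(3:ℝ)/2) := by
      intro y hy
      have hyβ : β < y := hy
      have hy0 : 0 < y := hβ.trans hyβ
      set θ := 1/(2*(1-lam)) with hθ_def
      have hθ0 : 0 < θ := by positivity
      have hθ1 : θ ≤ 1 := by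
        rw [hθ_def, div_le_one (by linarith)]; linarith
      have hgm : (p*y)^θ * t^(1-θ) ≤ p*y + t := gm_le_add (by positivity) ht hθ0.le hθ1
      have r1 : (p*y+t)^(lam-1) ≤ ((p*y)^θ * t^(1-θ))^(lam-1) :=
        Real.rpow_le_rpow_of_nonpos (by positivity) hgm (by linarith)
      have r2 : ((p*y)^θ * t^(1-θ))^(lam-1) = (p*y)^(-(1:ℝ)/2) * t^(lam-1/2) := by
        rw [Real.mul_rpow (by positivity) (by positivity), ← Real.rpow_mul (by positivity),
          ← Real.rpow_mul ht.le]
        congr 1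
        · congr 1
          rw [hθ_def]; field_simp; ring
        · congr 1
          rw [hθ_def]; field_simp; ring
      have r3 : (p*y)^(-(1:ℝ)/2) = p^(-(1:ℝ)/2) * y^(-(1:ℝ)/2) :=
        Real.mul_rpow hp.le hy0.le
      have r4 : (p*y+t)^(lam-1) * p * (ξ/y)
          ≤ (p^(-(1:ℝ)/2) * y^(-(1:ℝ)/2) * t^(lam-1/2)) * p * (ξ/y) := by
        have hpos : 0 < p * (ξ/y) := by positivity
        have := mul_le_mul_of_nonneg_right (r1.trans_eq (r2.trans (by rw [r3]))) hpos.le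
        calc (p*y+t)^(lam-1) * p * (ξ/y) = (p*y+t)^(lam-1) * (p * (ξ/y)) := by ring
          _ ≤ (p^(-(1:ℝ)/2) * y^(-(1:ℝ)/2) * t^(lam-1/2)) * (p * (ξ/y)) := this
          _ = _ := by ring
      have r5 : (p^(-(1:ℝ)/2) * y^(-(1:ℝ)/2) * t^(lam-1/2)) * p * (ξ/y)
          = c * y ^ (-(3:ℝ)/2) := by
        have e1 : p * p^(-(1:ℝ)/2) = p^((1:ℝ)/2) := by
          nth_rewrite 1 [← Real.rpow_one p]
          rw [← Real.rpow_add hp]; norm_num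
        have e2 : y^(-(1:ℝ)/2) / y = y^(-(3:ℝ)/2) := by
          nth_rewrite 2 [← Real.rpow_one y]
          rw [← Real.rpow_sub hy0]; norm_num
        rw [hc_def]
        field_simp
        rw [← e1, show (-(3/2):ℝ) = -(3:ℝ)/2 by norm_num, ← e2, show (-(1/2):ℝ) = -(1:ℝ)/2 by norm_num]
        field_simp
      linarith [r4, r5.symm.le]
    have hmono := setLIntegral_mono' (f := fun y => ENNReal.ofReal ((p*y+t)^(lam-1) * p * (ξ/y)))
      (g := fun y => ENNReal.ofReal (c * y ^ (-(3:ℝ)/2))) (μ := volume) measurableSet_Ioi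
      (fun y hy => ENNReal.ofReal_le_ofReal (hpt y hy))
    have hint : IntegrableOn (fun y : ℝ => c * y ^ (-(3:ℝ)/2)) (Ioi β) :=
      (integrableOn_Ioi_rpow_of_lt (by norm_num) hβ).const_mul c
    have heq : ∫⁻ y in Ioi β, ENNReal.ofReal (c * y ^ (-(3:ℝ)/2))
        = ENNReal.ofReal (∫ y in Ioi β, c * y ^ (-(3:ℝ)/2)) := by
      rw [ofReal_integral_eq_lintegral_ofReal hint]
      exact (ae_restrict_iff' measurableSet_Ioi).2 (ae_of_all _ fun y hy => by
        have : (0:ℝ) < y := hβ.trans hy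
        positivity)
    have hval : ∫ y in Ioi β, c * y ^ (-(3:ℝ)/2) = c * (2 * β^(-(1:ℝ)/2)) := by
      rw [MeasureTheory.integral_const_mul, integral_Ioi_rpow_of_lt (by norm_num) hβ]
      congr 1
      rw [show (-(3:ℝ)/2 + 1) = -((1:ℝ)/2) by norm_num]
      ring
    -- final real inequality
    have hfinal : c * (2 * β^(-(1:ℝ)/2)) ≤ ξ * Ctail lam β * S := by
      have hid : c * (2 * β^(-(1:ℝ)/2)) = (2*ξ*β^(lam-1)) * (p^lam * s^((1:ℝ)/2-lam)) := by
        have e1 : p^((1:ℝ)/2) = p^lam * p^((1:ℝ)/2-lam) := by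
          rw [← Real.rpow_add hp]; norm_num
        have e2 : p^((1:ℝ)/2-lam) * t^(lam-1/2) = (p/t)^((1:ℝ)/2-lam) := by
          rw [Real.div_rpow hp.le ht.le]
          rw [show lam - 1/2 = -((1:ℝ)/2-lam) by ring, Real.rpow_neg ht.le]
          ring
        have e3 : p/t = s/β := by rw [hs_def]; field_simp
        have e4 : (s/β)^((1:ℝ)/2-lam) = s^((1:ℝ)/2-lam) * β^(-((1:ℝ)/2-lam)) := by
          rw [Real.div_rpow hs.le hβ.le, Real.rpow_neg hβ.le, div_eq_mul_inv]
        have e5 : β^(-((1:ℝ)/2-lam)) * β^(-(1:ℝ)/2) = β^(lam-1) := by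
          rw [← Real.rpow_add hβ]; congr 1; ring
        rw [hc_def, e1, mul_assoc (p^lam), e2, e3, e4]
        rw [show ξ * (p ^ lam * (s ^ ((1:ℝ)/2 - lam) * β ^ (-((1:ℝ)/2 - lam)))) * (2 * β ^ (-(1:ℝ)/2))
          = 2*ξ*(β^(-((1:ℝ)/2-lam)) * β^(-(1:ℝ)/2)) * (p^lam * s^((1:ℝ)/2-lam)) by ring, e5]
      have hq2 : (1+s⁻¹) ≤ 2/s := by
        have h1 : (1:ℝ) ≤ 1/s := by rw [le_div_iff₀ hs]; linarith
        have h2 : (2:ℝ)/s = 1/s + 1/s := by ring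
        rw [h2, inv_eq_one_div]; linarith
      have hq3 : (2/s)^(lam-1/2) ≤ (1+s⁻¹)^(lam-1/2) :=
        Real.rpow_le_rpow_of_nonpos hq hq2 (by linarith)
      have hq4 : (2/s)^(lam-1/2) = (2:ℝ)^(lam-1/2) * s^((1:ℝ)/2-lam) := by
        rw [Real.div_rpow (by norm_num) hs.le, div_eq_mul_inv, ← Real.rpow_neg hs.le]
        norm_num
      have hlow : p^lam * ((2:ℝ)^(lam-1/2) * s^((1:ℝ)/2-lam)) ≤ S :=
        mul_le_mul_of_nonneg_left (hq4 ▸ hq3) (Real.rpow_pos_of_pos hp _).le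
      have hCt : 2*c1*β^(lam-1) ≤ Ctail lam β := by
        unfold Ctail
        rw [← hc1_def]
        have h0 : (0:ℝ) < 1/(1-lam) := by positivity
        nlinarith [mul_pos (mul_pos hc1 hβl1) h0]
      calc c * (2 * β^(-(1:ℝ)/2)) = (2*ξ*β^(lam-1)) * (p^lam * s^((1:ℝ)/2-lam)) := hid
        _ = (2*ξ*β^(lam-1)*c1) * (p^lam * ((2:ℝ)^(lam-1/2) * s^((1:ℝ)/2-lam))) := by
            rw [show (2*ξ*β^(lam-1)*c1) * (p^lam * ((2:ℝ)^(lam-1/2) * s^((1:ℝ)/2-lam)))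
              = (c1*(2:ℝ)^(lam-1/2)) * ((2*ξ*β^(lam-1)) * (p^lam * s^((1:ℝ)/2-lam))) by ring,
              hc1inv, one_mul]
        _ ≤ (2*ξ*β^(lam-1)*c1) * S := by
            apply mul_le_mul_of_nonneg_left hlow (by positivity)
        _ = ξ * (2*c1*β^(lam-1)) * S := by ring
        _ ≤ ξ * Ctail lam β * S := by
            apply mul_le_mul_of_nonneg_right _ hS.le
            exact mul_le_mul_of_nonneg_left hCt hξ.le
    calc ∫⁻ y in Ioi β, ENNReal.ofReal ((p*y+t)^(lam-1) * p * (ξ/y))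
        ≤ ∫⁻ y in Ioi β, ENNReal.ofReal (c * y ^ (-(3:ℝ)/2)) := hmono
      _ = ENNReal.ofReal (∫ y in Ioi β, c * y ^ (-(3:ℝ)/2)) := heq
      _ = ENNReal.ofReal (c * (2 * β^(-(1:ℝ)/2))) := by rw [hval]
      _ ≤ _ := ENNReal.ofReal_le_ofReal hfinal
  · -- 1 ≤ s case
    set c := ξ * p^lam with hc_def
    have hcpos : 0 < c := by positivity
    have hpt : ∀ y ∈ Ioi β, (p*y+t)^(lam-1) * p * (ξ/y) ≤ c * y ^ (lam-2) := by
      intro y hy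
      have hy0 : 0 < y := hβ.trans hy
      have r1 : (p*y+t)^(lam-1) ≤ (p*y)^(lam-1) :=
        Real.rpow_le_rpow_of_nonpos (by positivity) (by linarith) (by linarith)
      have r2 : (p*y)^(lam-1) = p^(lam-1) * y^(lam-1) := Real.mul_rpow hp.le hy0.le
      have r3 : p^(lam-1) * p = p^lam := by
        nth_rewrite 2 [← Real.rpow_one p]
        rw [← Real.rpow_add hp]; ring_nf
      have r4 : y^(lam-1) / y = y^(lam-2) := by
        nth_rewrite 2 [← Real.rpow_one y]
        rw [← Real.rpow_sub hy0]; ring_nf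
      calc (p*y+t)^(lam-1) * p * (ξ/y) ≤ (p*y)^(lam-1) * p * (ξ/y) := by
            apply mul_le_mul_of_nonneg_right _ (by positivity)
            exact mul_le_mul_of_nonneg_right r1 hp.le
        _ = (ξ * (p^(lam-1)*p)) * (y^(lam-1)/y) := by rw [r2]; ring
        _ = c * y ^ (lam-2) := by rw [r3, r4, hc_def]
    have hmono := setLIntegral_mono' (f := fun y => ENNReal.ofReal ((p*y+t)^(lam-1) * p * (ξ/y)))
      (g := fun y => ENNReal.ofReal (c * y ^ (lam-2))) (μ := volume) measurableSet_Ioi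
      (fun y hy => ENNReal.ofReal_le_ofReal (hpt y hy))
    have hint : IntegrableOn (fun y : ℝ => c * y ^ (lam-2)) (Ioi β) :=
      (integrableOn_Ioi_rpow_of_lt (by linarith) hβ).const_mul c
    have heq : ∫⁻ y in Ioi β, ENNReal.ofReal (c * y ^ (lam-2))
        = ENNReal.ofReal (∫ y in Ioi β, c * y ^ (lam-2)) := by
      rw [ofReal_integral_eq_lintegral_ofReal hint]
      exact (ae_restrict_iff' measurableSet_Ioi).2 (ae_of_all _ fun y hy => by
        have : (0:ℝ) < y := hβ.trans hy
        positivity)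
    have hval : ∫ y in Ioi β, c * y ^ (lam-2) = c * (β^(lam-1) / (1-lam)) := by
      rw [MeasureTheory.integral_const_mul, integral_Ioi_rpow_of_lt (by linarith) hβ]
      rw [show lam - 2 + 1 = lam - 1 by ring]
      congr 1
      rw [div_eq_div_iff (show lam-1 ≠ 0 from ne_of_lt (by linarith))
        (show 1-lam ≠ 0 from ne_of_gt (by linarith))]
      ring
    have hps : p^lam ≤ c1 * S := by
      have h1 : (1+s⁻¹) ≤ 2 := by
        have : s⁻¹ ≤ 1 := inv_le_one_of_one_le₀ hs1
        linarith
      have h2 : (2:ℝ)^(lam-1/2) ≤ (1+s⁻¹)^(lam-1/2) :=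
        Real.rpow_le_rpow_of_nonpos hq h1 (by linarith)
      calc p^lam = p^lam * (c1 * (2:ℝ)^(lam-1/2)) := by rw [hc1inv, mul_one]
        _ ≤ p^lam * (c1 * (1+s⁻¹)^(lam-1/2)) := by
            apply mul_le_mul_of_nonneg_left _ (Real.rpow_pos_of_pos hp _).le
            exact mul_le_mul_of_nonneg_left h2 hc1.le
        _ = c1 * S := by rw [hS_def]; ring
    have hfinal : c * (β^(lam-1)/(1-lam)) ≤ ξ * Ctail lam β * S := by
      have h3 : c * (β^(lam-1)/(1-lam)) ≤ (ξ * (β^(lam-1)/(1-lam))) * (c1 * S) := by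
        rw [hc_def]
        calc ξ * p^lam * (β^(lam-1)/(1-lam)) = (ξ * (β^(lam-1)/(1-lam))) * p^lam := by ring
          _ ≤ (ξ * (β^(lam-1)/(1-lam))) * (c1 * S) :=
              mul_le_mul_of_nonneg_left hps (by positivity)
      have h4 : (ξ * (β^(lam-1)/(1-lam))) * (c1 * S) ≤ ξ * Ctail lam β * S := by
        unfold Ctail
        rw [← hc1_def]
        rw [show (ξ * (β^(lam-1)/(1-lam))) * (c1 * S) = ξ * (c1 * β^(lam-1) * (1/(1-lam))) * S by ring]
        apply mul_le_mul_of_nonneg_right _ hS.le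
        apply mul_le_mul_of_nonneg_left _ hξ.le
        nlinarith [hβl1, hc1, h1lam]
      linarith
    calc ∫⁻ y in Ioi β, ENNReal.ofReal ((p*y+t)^(lam-1) * p * (ξ/y))
        ≤ ∫⁻ y in Ioi β, ENNReal.ofReal (c * y ^ (lam-2)) := hmono
      _ = ENNReal.ofReal (∫ y in Ioi β, c * y ^ (lam-2)) := heq
      _ = ENNReal.ofReal (c * (β^(lam-1)/(1-lam))) := by rw [hval]
      _ ≤ _ := ENNReal.ofReal_le_ofReal hfinal
end

lemma Ctail_nonneg {lam β : ℝ} (hlam : lam < 1/2) (hβ : 0 < β) : 0 ≤ Ctail lam β := by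
  unfold Ctail
  have h1 : (0:ℝ) < 1 - lam := by linarith
  positivity

set_option maxHeartbeats 2000000 in
theorem stmt_0
    {lam ξ β : ℝ} (hlam : lam < 1/2) (hξ : 0 < ξ) (hξβ : ξ ≤ β)
    {Ω : Type*} [MeasurableSpace Ω] (P : Measure Ω) [IsProbabilityMeasure P]
    (X : Ω → ℝ) (hX : Measurable X) (hXpos : ∀ ω, 0 < X ω)
    (htail : ∀ x : ℝ, β ≤ x → P {ω | x ≤ X ω} = ENNReal.ofReal (ξ / x))
    (hmom : Integrable (fun ω => (Flam lam (X ω))^2) P) :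
    ∃ χ : ℝ, ∀ p : ℝ, 0 < p → ∀ n : ℕ, 0 < n →
      |∫ ω, (Flam lam (p * X ω + 1/(n:ℝ)) - Flam lam (p * β + 1/(n:ℝ))) ∂P|
        ≤ χ * Real.sqrt (phiW lam β p n) := by
  have hβ : 0 < β := lt_of_lt_of_le hξ hξβ
  set I2 := ∫ ω, (Flam lam (X ω))^2 ∂P with hI2def
  have hI2 : 0 ≤ I2 := integral_nonneg fun ω => sq_nonneg _
  set R := 2 + |Flam lam β| + I2 with hRdef
  have hR : 0 ≤ R := by positivity
  have hKn : 0 ≤ Kneg lam β := Kneg_nonneg hβ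
  have hCt : 0 ≤ Ctail lam β := Ctail_nonneg hlam hβ
  refine ⟨Kneg lam β * R + ξ * Ctail lam β, ?_⟩
  intro p hp n hn
  have hn' : (0:ℝ) < n := Nat.cast_pos.mpr hn
  set t := 1/(n:ℝ) with htdef
  have ht : 0 < t := by positivity
  have harg : p*β/t = β*n*p := by rw [htdef]; field_simp
  set S := p ^ lam * (1+(p*β/t)⁻¹) ^ (lam - 1/2) with hSdef
  have hS : 0 < S := by positivity
  have hsq : Real.sqrt (phiW lam β p n) = S := by
    rw [sqrt_phiW hβ hp hn, hSdef, harg]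
  have hFXm : Measurable fun ω => Flam lam (X ω) := flam_comp_measurable hX hXpos
  -- the function G and its exp-version
  set G : ℝ → ℝ := fun y => (p*y+t)^(lam-1) * p with hGdef
  set Ge : ℝ → ℝ := fun y => Real.exp (Real.log (p*y+t) * (lam-1)) * p with hGedef
  have hGe_eq : ∀ y : ℝ, β < y → Ge y = G y := by
    intro y hy
    have hpy : 0 < p*y+t := by nlinarith [hβ.trans hy]
    rw [hGedef, hGdef]
    simp only
    rw [Real.rpow_def_of_pos hpy]
  have hGnonneg : ∀ y : ℝ, β < y → 0 ≤ G y := by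
    intro y hy
    have hpy : 0 < p*y+t := by nlinarith [hβ.trans hy]
    rw [hGdef]; positivity
  -- B and its properties
  set B : ℝ → ℝ := fun x => ∫ y in Ioc β x, G y with hBdef
  have hBnonneg : ∀ x, 0 ≤ B x := by
    intro x
    apply setIntegral_nonneg measurableSet_Ioc
    intro y hy
    exact hGnonneg y hy.1
  have hBzero : ∀ x, x ≤ β → B x = 0 := by
    intro x hxle
    rw [hBdef]
    simp only
    rw [Set.Ioc_eq_empty (by exact fun h => absurd hxle (not_le.mpr h)), Measure.restrict_empty,
      integral_zero_measure]
  have hBeq : ∀ x, β ≤ x → B x = Flam lam (p*x+t) - Flam lam (p*β+t) := by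
    intro x hβx
    rw [hBdef]
    simp only
    rw [← intervalIntegral.integral_of_le hβx]
    exact flam_FTC hp ht hβ hβx
  have hGint : ∀ x, IntegrableOn G (Ioc β x) := by
    intro x
    rcases le_or_gt x β with h | h
    · rw [Set.Ioc_eq_empty (by exact fun hc => absurd h (not_le.mpr hc))]
      exact integrableOn_empty
    · have hcont : ContinuousOn G (Icc β x) := by
        apply ContinuousOn.mul _ continuousOn_const
        apply ContinuousOn.rpow_const
        · exact ((continuous_const.mul continuous_id).add continuous_const).continuousOn
        · intro y hy
          have : 0 < p*y+t := by nlinarith [hy.1]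
          exact Or.inl this.ne'
      exact (hcont.integrableOn_Icc).mono_set Set.Ioc_subset_Icc_self
  -- pointwise bound on |g|
  set A : ℝ → ℝ := fun x => Kneg lam β * S * (1 + |Flam lam x| + |Flam lam β|) with hAdef
  have hAnonneg : ∀ x, 0 ≤ A x := by
    intro x
    rw [hAdef]
    simp only
    apply mul_nonneg (mul_nonneg hKn hS.le)
    positivity
  have habs : ∀ ω, |Flam lam (p * X ω + t) - Flam lam (p*β+t)| ≤ A (X ω) + B (X ω) := by
    intro ω
    have hx := hXpos ω
    have hneg : Flam lam (p*β+t) - Flam lam (p * X ω + t) ≤ A (X ω) := lemA hlam hβ hp ht hx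
    rcases le_or_gt (X ω) β with hle | hlt
    · have h0 : Flam lam (p * X ω + t) - Flam lam (p*β+t) ≤ 0 := by
        have := flam_mono (lam := lam) (show 0 < p * X ω + t by positivity) (show p * X ω + t ≤ p*β+t by nlinarith)
        linarith
      rw [abs_of_nonpos h0]
      have := hBnonneg (X ω)
      linarith
    · have heq : B (X ω) = Flam lam (p * X ω + t) - Flam lam (p*β+t) := hBeq (X ω) hlt.le
      have h0 : 0 ≤ Flam lam (p * X ω + t) - Flam lam (p*β+t) := heq ▸ hBnonneg (X ω)
      rw [abs_of_nonneg h0, ← heq]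
      linarith [hAnonneg (X ω)]
  -- the kernel W
  set W : Ω → ℝ → ℝ≥0∞ := fun ω y =>
    if β < y ∧ y ≤ X ω then ENNReal.ofReal (Ge y) else 0 with hWdef
  have hWmeas : Measurable (Function.uncurry W) := by
    apply Measurable.ite
    · have h1 : MeasurableSet {q : Ω × ℝ | β < q.2} := measurable_snd measurableSet_Ioi
      have h2 : MeasurableSet {q : Ω × ℝ | q.2 ≤ X q.1} :=
        measurableSet_le measurable_snd (hX.comp measurable_fst)
      exact h1.inter h2
    · apply Measurable.ennreal_ofReal
      apply Measurable.mul_const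
      apply Real.measurable_exp.comp
      apply Measurable.mul_const
      apply Real.measurable_log.comp
      exact (measurable_snd.const_mul p).add_const t
    · exact measurable_const
  -- fB equals double lintegral
  have hfB : ∀ ω : Ω, ENNReal.ofReal (B (X ω)) = ∫⁻ y, W ω y := by
    intro ω
    rcases le_or_gt (X ω) β with hle | hlt
    · rw [hBzero _ hle, ENNReal.ofReal_zero]
      symm
      have hzero : ∀ y, W ω y = 0 := by
        intro y
        rw [hWdef]
        simp only
        rw [if_neg]
        rintro ⟨h1, h2⟩
        linarith
      simp only [hzero, lintegral_zero]
    · have hint := hGint (X ω)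
      have hofReal : ENNReal.ofReal (B (X ω)) = ∫⁻ y in Ioc β (X ω), ENNReal.ofReal (G y) := by
        rw [hBdef]
        simp only
        rw [ofReal_integral_eq_lintegral_ofReal hint]
        exact (ae_restrict_iff' measurableSet_Ioc).2 (ae_of_all _ fun y hy => hGnonneg y hy.1)
      rw [hofReal, ← lintegral_indicator measurableSet_Ioc]
      apply lintegral_congr
      intro y
      rw [hWdef]
      simp only [Set.indicator_apply, Set.mem_Ioc]
      by_cases hcond : β < y ∧ y ≤ X ω
      · rw [if_pos hcond, if_pos hcond, hGe_eq y hcond.1]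
      · rw [if_neg hcond, if_neg hcond]
  have hswap : ∫⁻ ω, (∫⁻ y, W ω y) ∂P = ∫⁻ y, (∫⁻ ω, W ω y ∂P) :=
    lintegral_lintegral_swap hWmeas.aemeasurable
  have hinner : ∀ y : ℝ, (∫⁻ ω, W ω y ∂P)
      = Set.indicator (Ioi β) (fun y => ENNReal.ofReal (G y * (ξ/y))) y := by
    intro y
    rcases lt_or_ge β y with hy | hy
    · have hset : MeasurableSet {ω : Ω | y ≤ X ω} := measurableSet_le measurable_const hX
      have hWy : ∀ ω, W ω y
          = Set.indicator {ω : Ω | y ≤ X ω} (fun _ => ENNReal.ofReal (Ge y)) ω := by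
        intro ω
        rw [hWdef]
        simp only [Set.indicator_apply, Set.mem_setOf_eq]
        by_cases h2 : y ≤ X ω
        · rw [if_pos ⟨hy, h2⟩, if_pos h2]
        · rw [if_neg (by rintro ⟨_, hc⟩; exact h2 hc), if_neg h2]
      calc ∫⁻ ω, W ω y ∂P
          = ∫⁻ ω, Set.indicator {ω : Ω | y ≤ X ω} (fun _ => ENNReal.ofReal (Ge y)) ω ∂P :=
            lintegral_congr hWy
        _ = ENNReal.ofReal (Ge y) * P {ω | y ≤ X ω} := lintegral_indicator_const hset _
        _ = ENNReal.ofReal (G y) * ENNReal.ofReal (ξ/y) := by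
            rw [hGe_eq y hy, htail y hy.le]
        _ = ENNReal.ofReal (G y * (ξ/y)) := (ENNReal.ofReal_mul (hGnonneg y hy)).symm
        _ = Set.indicator (Ioi β) (fun y => ENNReal.ofReal (G y * (ξ/y))) y :=
            (Set.indicator_of_mem (show y ∈ Ioi β from hy)
              (fun y => ENNReal.ofReal (G y * (ξ/y)))).symm
    · have hzero : ∀ ω : Ω, W ω y = 0 := by
        intro ω
        rw [hWdef]
        exact if_neg (by rintro ⟨h1, _⟩; exact absurd h1 (not_lt.mpr hy))
      simp only [hzero, lintegral_zero]
      rw [Set.indicator_of_notMem (by simpa using hy)]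
  have hLB : ∫⁻ ω, ENNReal.ofReal (B (X ω)) ∂P ≤ ENNReal.ofReal (ξ * Ctail lam β * S) := by
    calc ∫⁻ ω, ENNReal.ofReal (B (X ω)) ∂P = ∫⁻ ω, (∫⁻ y, W ω y) ∂P := lintegral_congr hfB
      _ = ∫⁻ y, (∫⁻ ω, W ω y ∂P) := hswap
      _ = ∫⁻ y, Set.indicator (Ioi β) (fun y => ENNReal.ofReal (G y * (ξ/y))) y :=
          lintegral_congr hinner
      _ = ∫⁻ y in Ioi β, ENNReal.ofReal (G y * (ξ/y)) := lintegral_indicator measurableSet_Ioi _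
      _ ≤ ENNReal.ofReal (ξ * Ctail lam β * S) := by
          rw [hSdef, hGdef]
          exact tail_bound hlam hβ hp ht hξ
  -- LA bound
  have hmeas2 : Measurable fun ω => ENNReal.ofReal (1 + |Flam lam (X ω)| + |Flam lam β|) :=
    ((hFXm.abs.const_add 1).add_const _).ennreal_ofReal
  have hmoment : ∫⁻ ω, ENNReal.ofReal |Flam lam (X ω)| ∂P ≤ 1 + ENNReal.ofReal I2 := by
    calc ∫⁻ ω, ENNReal.ofReal |Flam lam (X ω)| ∂P
        ≤ ∫⁻ ω, (1 + ENNReal.ofReal ((Flam lam (X ω))^2)) ∂P := by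
          apply lintegral_mono
          intro ω
          calc ENNReal.ofReal |Flam lam (X ω)|
              ≤ ENNReal.ofReal (1 + (Flam lam (X ω))^2) := by
                apply ENNReal.ofReal_le_ofReal
                nlinarith [sq_abs (Flam lam (X ω)), abs_nonneg (Flam lam (X ω)),
                  sq_nonneg (|Flam lam (X ω)| - 1)]
            _ = ENNReal.ofReal 1 + ENNReal.ofReal ((Flam lam (X ω))^2) :=
                ENNReal.ofReal_add (by norm_num) (sq_nonneg _)
            _ = 1 + ENNReal.ofReal ((Flam lam (X ω))^2) := by rw [ENNReal.ofReal_one]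
      _ = 1 + ∫⁻ ω, ENNReal.ofReal ((Flam lam (X ω))^2) ∂P := by
          rw [lintegral_add_left measurable_const, lintegral_const, measure_univ, mul_one]
      _ = 1 + ENNReal.ofReal I2 := by
          rw [← ofReal_integral_eq_lintegral_ofReal hmom (ae_of_all _ fun ω => sq_nonneg _)]
  have hInner : ∫⁻ ω, ENNReal.ofReal (1 + |Flam lam (X ω)| + |Flam lam β|) ∂P
      ≤ ENNReal.ofReal R := by
    calc ∫⁻ ω, ENNReal.ofReal (1 + |Flam lam (X ω)| + |Flam lam β|) ∂P
        ≤ ∫⁻ ω, (ENNReal.ofReal (1 + |Flam lam β|) + ENNReal.ofReal |Flam lam (X ω)|) ∂P := by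
          apply lintegral_mono
          intro ω
          calc ENNReal.ofReal (1 + |Flam lam (X ω)| + |Flam lam β|)
              = ENNReal.ofReal ((1 + |Flam lam β|) + |Flam lam (X ω)|) := by ring_nf
            _ ≤ _ := ENNReal.ofReal_add_le
      _ = ENNReal.ofReal (1 + |Flam lam β|) + ∫⁻ ω, ENNReal.ofReal |Flam lam (X ω)| ∂P := by
          rw [lintegral_add_left measurable_const, lintegral_const, measure_univ, mul_one]
      _ ≤ ENNReal.ofReal (1 + |Flam lam β|) + (1 + ENNReal.ofReal I2) :=
          add_le_add le_rfl hmoment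
      _ = ENNReal.ofReal R := by
          rw [← ENNReal.ofReal_one, ← ENNReal.ofReal_add (by norm_num) hI2,
            ← ENNReal.ofReal_add (by positivity) (by positivity)]
          congr 1
          rw [hRdef]
          ring
  have hLA : ∫⁻ ω, ENNReal.ofReal (A (X ω)) ∂P ≤ ENNReal.ofReal (Kneg lam β * R * S) := by
    have hptA : ∀ ω : Ω, ENNReal.ofReal (A (X ω))
        = ENNReal.ofReal (Kneg lam β * S)
            * ENNReal.ofReal (1 + |Flam lam (X ω)| + |Flam lam β|) := by
      intro ω
      rw [hAdef]
      simp only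
      rw [← ENNReal.ofReal_mul (mul_nonneg hKn hS.le)]
    calc ∫⁻ ω, ENNReal.ofReal (A (X ω)) ∂P
        = ENNReal.ofReal (Kneg lam β * S)
            * ∫⁻ ω, ENNReal.ofReal (1 + |Flam lam (X ω)| + |Flam lam β|) ∂P := by
          rw [lintegral_congr hptA, lintegral_const_mul _ hmeas2]
      _ ≤ ENNReal.ofReal (Kneg lam β * S) * ENNReal.ofReal R := mul_le_mul_right hInner _
      _ = ENNReal.ofReal (Kneg lam β * S * R) := (ENNReal.ofReal_mul (mul_nonneg hKn hS.le)).symm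
      _ = ENNReal.ofReal (Kneg lam β * R * S) := by congr 1; ring
  -- main lintegral bound
  have hfAmeas : Measurable fun ω => ENNReal.ofReal (A (X ω)) := by
    rw [hAdef]
    exact (((hFXm.abs.const_add 1).add_const _).const_mul _).ennreal_ofReal
  have hmain : ∫⁻ ω, ENNReal.ofReal ‖Flam lam (p * X ω + t) - Flam lam (p*β+t)‖ ∂P
      ≤ ENNReal.ofReal ((Kneg lam β * R + ξ * Ctail lam β) * S) := by
    calc ∫⁻ ω, ENNReal.ofReal ‖Flam lam (p * X ω + t) - Flam lam (p*β+t)‖ ∂P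
        ≤ ∫⁻ ω, (ENNReal.ofReal (A (X ω)) + ENNReal.ofReal (B (X ω))) ∂P := by
          apply lintegral_mono
          intro ω
          simp only [Real.norm_eq_abs]
          calc ENNReal.ofReal |Flam lam (p * X ω + t) - Flam lam (p*β+t)|
              ≤ ENNReal.ofReal (A (X ω) + B (X ω)) := ENNReal.ofReal_le_ofReal (habs ω)
            _ ≤ _ := ENNReal.ofReal_add_le
      _ = (∫⁻ ω, ENNReal.ofReal (A (X ω)) ∂P) + ∫⁻ ω, ENNReal.ofReal (B (X ω)) ∂P :=
          lintegral_add_left hfAmeas _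
      _ ≤ ENNReal.ofReal (Kneg lam β * R * S) + ENNReal.ofReal (ξ * Ctail lam β * S) :=
          add_le_add hLA hLB
      _ = ENNReal.ofReal (Kneg lam β * R * S + ξ * Ctail lam β * S) :=
          (ENNReal.ofReal_add (by positivity) (by positivity)).symm
      _ = ENNReal.ofReal ((Kneg lam β * R + ξ * Ctail lam β) * S) := by congr 1; ring
  -- conclusion
  rw [hsq]
  have hχS : 0 ≤ (Kneg lam β * R + ξ * Ctail lam β) * S :=
    mul_nonneg (add_nonneg (mul_nonneg hKn hR) (mul_nonneg hξ.le hCt)) hS.le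
  calc |∫ ω, (Flam lam (p * X ω + t) - Flam lam (p*β+t)) ∂P|
      = ‖∫ ω, (Flam lam (p * X ω + t) - Flam lam (p*β+t)) ∂P‖ := (Real.norm_eq_abs _).symm
    _ ≤ (∫⁻ ω, ENNReal.ofReal ‖Flam lam (p * X ω + t) - Flam lam (p*β+t)‖ ∂P).toReal :=
        norm_integral_le_lintegral_norm _
    _ ≤ (Kneg lam β * R + ξ * Ctail lam β) * S := ENNReal.toReal_le_of_le_ofReal hχS hmain
end

section
/- Let λ < 1/2 and β > 0, and let (p_{i,n}) be a Zipf array with constants 0 < κ₁ ≤ κ₂. Then for every δ > 0 there exists a constant M_δ such that for every integer n ≥ 2, n^{−1+2λ}·(ln n)·Σ_{i=1}^{⌊n/(δ·ln n)⌋} φ(p_{i,n}, n) ≤ M_δ. -/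
open MeasureTheory Real Filter Topology

/-- `p` is a Zipf array with constants `κ₁ ≤ κ₂`. -/
def IsZipfArray (p : ℕ → ℕ → ℝ) (κ₁ κ₂ : ℝ) : Prop :=
  0 < κ₁ ∧ κ₁ ≤ κ₂ ∧ ∀ n : ℕ, 2 ≤ n → ∀ i : ℕ, 1 ≤ i → i ≤ n →
    0 < p i n ∧ p i n ≤ 1 ∧
    κ₁ / ((i : ℝ) * Real.log n) ≤ p i n ∧ p i n ≤ κ₂ / ((i : ℝ) * Real.log n)

/-- Sum of `i^{-a}` for `0 ≤ a < 1` is at most `K^{1-a}/(1-a)`. -/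
lemma aux_sum_rpow_le {a : ℝ} (ha0 : 0 ≤ a) (ha1 : a < 1) (K : ℕ) :
    ∑ i ∈ Finset.Icc 1 K, (i : ℝ) ^ (-a) ≤ (K : ℝ) ^ (1 - a) / (1 - a) := by
  have h1a : (0:ℝ) < 1 - a := by linarith
  induction K with
  | zero =>
    simp [Real.zero_rpow h1a.ne']
  | succ K ih =>
    have hK1 : (0:ℝ) < (K : ℝ) + 1 := by positivity
    rw [Finset.sum_Icc_succ_top (by omega : 1 ≤ K + 1)]
    have hgm : (K : ℝ) ^ (1 - a) * ((K : ℝ) + 1) ^ a ≤ (1 - a) * K + a * ((K : ℝ) + 1) := by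
      have := Real.geom_mean_le_arith_mean2_weighted h1a.le ha0 (Nat.cast_nonneg K)
        (by positivity : (0:ℝ) ≤ (K : ℝ) + 1) (by ring)
      linarith
    have hpow : ((K : ℝ) + 1) ^ (-a) = (((K : ℝ) + 1) ^ a)⁻¹ := by
      rw [Real.rpow_neg hK1.le]
    have hpa : (0:ℝ) < ((K : ℝ) + 1) ^ a := Real.rpow_pos_of_pos hK1 a
    have hkey : (K : ℝ) ^ (1 - a) ≤ ((K : ℝ) + a) * (((K : ℝ) + 1) ^ a)⁻¹ := by
      rw [← div_eq_mul_inv, le_div_iff₀ hpa]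
      nlinarith [hgm]
    have htop : ((K : ℝ) + 1) ^ (1 - a) = ((K : ℝ) + 1) * (((K : ℝ) + 1) ^ a)⁻¹ := by
      rw [← hpow, ← Real.rpow_one_add' hK1.le (by linarith : (1:ℝ) + -a ≠ 0)]
      ring_nf
    have hcast : ((K + 1 : ℕ) : ℝ) = (K : ℝ) + 1 := by push_cast; ring
    rw [hcast, hpow, htop]
    have hfinal : (K : ℝ) ^ (1 - a) / (1 - a) + (((K : ℝ) + 1) ^ a)⁻¹
        ≤ ((K : ℝ) + 1) * (((K : ℝ) + 1) ^ a)⁻¹ / (1 - a) := by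
      rw [div_add' _ _ _ h1a.ne', div_le_div_iff₀ h1a h1a]
      nlinarith [mul_le_mul_of_nonneg_right hkey h1a.le, hpa]
    linarith [ih]

/-- The weight is bounded by `p^{2λ}`. -/
lemma aux_phiW_le {lam β p : ℝ} (hlam : lam < 1/2) (hβ : 0 < β) (hp : 0 < p) (n : ℕ) :
    phiW lam β p n ≤ p ^ (2 * lam) := by
  unfold phiW
  have hbase : (1:ℝ) ≤ 1 + (β * n * p)⁻¹ := by
    have : (0:ℝ) ≤ (β * n * p)⁻¹ := by positivity
    linarith
  have h2 : (1 + (β * (n:ℝ) * p)⁻¹) ^ (-1 + 2 * lam) ≤ 1 :=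
    Real.rpow_le_one_of_one_le_of_nonpos hbase (by linarith)
  calc p ^ (2 * lam) * (1 + (β * n * p)⁻¹) ^ (-1 + 2 * lam)
      ≤ p ^ (2 * lam) * 1 := by
        apply mul_le_mul_of_nonneg_left h2 (Real.rpow_nonneg hp.le _)
    _ = p ^ (2 * lam) := by ring

theorem stmt_6 {lam β κ₁ κ₂ : ℝ} (hlam : lam < 1/2) (hβ : 0 < β)
    (p : ℕ → ℕ → ℝ) (hz : IsZipfArray p κ₁ κ₂) :
    ∀ δ : ℝ, 0 < δ → ∃ M : ℝ, ∀ n : ℕ, 2 ≤ n →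
      (n : ℝ) ^ (-1 + 2 * lam) * Real.log n *
        ∑ i ∈ Finset.Icc 1 (Nat.floor ((n : ℝ) / (δ * Real.log n))), phiW lam β (p i n) n
      ≤ M := by
  intro δ hδ
  obtain ⟨hκ₁, hκ₁₂, hzb⟩ := hz
  set a : ℝ := 2 * lam with ha_def
  have ha1 : a < 1 := by rw [ha_def]; linarith
  set f : ℕ → ℝ := fun n => (n : ℝ) ^ (-1 + 2 * lam) * Real.log n *
      ∑ i ∈ Finset.Icc 1 (Nat.floor ((n : ℝ) / (δ * Real.log n))), phiW lam β (p i n) n with hf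
  -- core bound for large n
  have core : ∀ n : ℕ, 2 ≤ n → 1 ≤ δ * Real.log n →
      f n ≤ max (κ₁ ^ a * δ ^ (a - 1)) (κ₂ ^ a * δ ^ (a - 1) / (1 - a)) := by
    intro n hn hδL
    have hn1 : (1:ℝ) < (n : ℝ) := by exact_mod_cast hn.trans_lt' one_lt_two
    have hx : (0:ℝ) < (n : ℝ) := by linarith
    set L : ℝ := Real.log n with hL_def
    have hL : 0 < L := Real.log_pos hn1
    set K : ℕ := Nat.floor ((n : ℝ) / (δ * L)) with hK_def
    have hKreal : (K : ℝ) ≤ (n : ℝ) / (δ * L) := Nat.floor_le (by positivity)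
    have hKn : K ≤ n := by
      have h1 : (n : ℝ) / (δ * L) ≤ (n : ℝ) := by
        rw [div_le_iff₀ (by positivity)]
        nlinarith
      calc K ≤ Nat.floor ((n : ℝ)) := Nat.floor_le_floor h1
        _ = n := Nat.floor_natCast n
    have hpb : ∀ i ∈ Finset.Icc 1 K, 0 < p i n ∧
        κ₁ / ((i : ℝ) * L) ≤ p i n ∧ p i n ≤ κ₂ / ((i : ℝ) * L) := by
      intro i hi
      simp only [Finset.mem_Icc] at hi
      obtain ⟨h1, h2, h3, h4⟩ := hzb n hn i hi.1 (hi.2.trans hKn)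
      exact ⟨h1, h3, h4⟩
    have hiL : ∀ i ∈ Finset.Icc 1 K, (0:ℝ) < (i:ℝ) * L ∧ (i:ℝ) * L ≤ (n:ℝ) / δ := by
      intro i hi
      simp only [Finset.mem_Icc] at hi
      have hi1 : (1:ℝ) ≤ (i:ℝ) := by exact_mod_cast hi.1
      have hiK : (i:ℝ) ≤ (K:ℝ) := by exact_mod_cast hi.2
      constructor
      · positivity
      · have : (i:ℝ) * L ≤ (K:ℝ) * L := by nlinarith
        have h2 : (K:ℝ) * L ≤ (n:ℝ) / δ := by
          rw [div_mul_eq_div_div] at hKreal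
          calc (K:ℝ) * L ≤ ((n:ℝ) / δ / L) * L := by nlinarith
            _ = (n:ℝ) / δ := by field_simp
        linarith
    have hphile : ∀ i ∈ Finset.Icc 1 K, phiW lam β (p i n) n ≤ (p i n) ^ a := by
      intro i hi
      exact aux_phiW_le hlam hβ (hpb i hi).1 n
    rcases le_or_gt a 0 with hA | hA
    · -- case a ≤ 0 : use lower bound p ≥ κ₁/(iL) ≥ κ₁ δ / n
      refine le_trans ?_ (le_max_left _ _)
      have hterm : ∀ i ∈ Finset.Icc 1 K,
          phiW lam β (p i n) n ≤ κ₁ ^ a / ((n:ℝ) / δ) ^ a := by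
        intro i hi
        obtain ⟨hil, hiu⟩ := hiL i hi
        have h0 : (0:ℝ) < κ₁ / ((i:ℝ) * L) := by positivity
        have h1 : (p i n) ^ a ≤ (κ₁ / ((i:ℝ) * L)) ^ a :=
          Real.rpow_le_rpow_of_nonpos h0 (hpb i hi).2.1 hA
        have h2 : (κ₁ / ((i:ℝ) * L)) ^ a = κ₁ ^ a / ((i:ℝ) * L) ^ a :=
          Real.div_rpow hκ₁.le (le_of_lt hil) a
        have h3 : ((n:ℝ) / δ) ^ a ≤ ((i:ℝ) * L) ^ a := by
          apply Real.rpow_le_rpow_of_nonpos hil hiu hA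
        have h4 : κ₁ ^ a / ((i:ℝ) * L) ^ a ≤ κ₁ ^ a / ((n:ℝ) / δ) ^ a := by
          apply div_le_div_of_nonneg_left (Real.rpow_nonneg hκ₁.le a)
            (Real.rpow_pos_of_pos (by positivity) a) h3
        calc phiW lam β (p i n) n ≤ (p i n) ^ a := hphile i hi
          _ ≤ (κ₁ / ((i:ℝ) * L)) ^ a := h1
          _ = κ₁ ^ a / ((i:ℝ) * L) ^ a := h2
          _ ≤ κ₁ ^ a / ((n:ℝ) / δ) ^ a := h4
      have hsum : ∑ i ∈ Finset.Icc 1 K, phiW lam β (p i n) n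
          ≤ (K : ℝ) * (κ₁ ^ a / ((n:ℝ) / δ) ^ a) := by
        calc ∑ i ∈ Finset.Icc 1 K, phiW lam β (p i n) n
            ≤ ∑ _i ∈ Finset.Icc 1 K, (κ₁ ^ a / ((n:ℝ) / δ) ^ a) := Finset.sum_le_sum hterm
          _ = (K : ℝ) * (κ₁ ^ a / ((n:ℝ) / δ) ^ a) := by
              rw [Finset.sum_const, Nat.card_Icc]; simp [nsmul_eq_mul]
      have hT : (0:ℝ) ≤ κ₁ ^ a / ((n:ℝ) / δ) ^ a := by positivity
      have hfle : f n ≤ (n:ℝ) ^ (-1 + a) * L * ((n:ℝ) / (δ * L) * (κ₁ ^ a / ((n:ℝ) / δ) ^ a)) := by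
        rw [hf]
        simp only [← ha_def, ← hL_def, ← hK_def]
        have hnn : (0:ℝ) ≤ (n:ℝ) ^ (-1 + a) * L := by positivity
        calc (n : ℝ) ^ (-1 + a) * L * ∑ i ∈ Finset.Icc 1 K, phiW lam β (p i n) n
            ≤ (n : ℝ) ^ (-1 + a) * L * ((K : ℝ) * (κ₁ ^ a / ((n:ℝ) / δ) ^ a)) :=
              mul_le_mul_of_nonneg_left hsum hnn
          _ ≤ (n:ℝ) ^ (-1 + a) * L * ((n:ℝ) / (δ * L) * (κ₁ ^ a / ((n:ℝ) / δ) ^ a)) := by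
              apply mul_le_mul_of_nonneg_left _ hnn
              exact mul_le_mul_of_nonneg_right hKreal hT
      refine hfle.trans_eq ?_
      have e1 : ((n:ℝ) / δ) ^ a = (n:ℝ) ^ a / δ ^ a := Real.div_rpow hx.le hδ.le a
      have e2 : (n:ℝ) ^ (-1 + a) * (n:ℝ) = (n:ℝ) ^ a := by
        rw [← Real.rpow_add_one hx.ne' (-1 + a)]
        norm_num
      have e3 : δ ^ (a - 1) = δ ^ a / δ := by
        rw [← Real.rpow_sub_one hδ.ne' a]
      have hna : (0:ℝ) < (n:ℝ) ^ a := Real.rpow_pos_of_pos hx a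
      have hda : (0:ℝ) < δ ^ a := Real.rpow_pos_of_pos hδ a
      have e2' : (n:ℝ) ^ (-1 + a) = (n:ℝ) ^ a / (n:ℝ) := by
        rw [show (-1 + a) = a - 1 by ring, Real.rpow_sub_one hx.ne']
      rw [e1, e2', e3]
      field_simp
    · -- case 0 < a < 1 : use upper bound p ≤ κ₂/(iL)
      refine le_trans ?_ (le_max_right _ _)
      have hκ₂ : 0 < κ₂ := lt_of_lt_of_le hκ₁ hκ₁₂
      have hterm : ∀ i ∈ Finset.Icc 1 K,
          phiW lam β (p i n) n ≤ κ₂ ^ a / L ^ a * (i:ℝ) ^ (-a) := by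
        intro i hi
        simp only [Finset.mem_Icc] at hi
        have hi0 : (0:ℝ) < (i:ℝ) := by exact_mod_cast hi.1.trans_lt' Nat.zero_lt_one
        have hsplit : (κ₂ / ((i:ℝ) * L)) ^ a = κ₂ ^ a / L ^ a * (i:ℝ) ^ (-a) := by
          rw [Real.div_rpow hκ₂.le (by positivity), Real.mul_rpow hi0.le hL.le,
            Real.rpow_neg hi0.le]
          ring
        have h1 : (p i n) ^ a ≤ (κ₂ / ((i:ℝ) * L)) ^ a := by
          apply Real.rpow_le_rpow (hpb i (Finset.mem_Icc.mpr hi)).1.le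
            (hpb i (Finset.mem_Icc.mpr hi)).2.2 hA.le
        calc phiW lam β (p i n) n ≤ (p i n) ^ a := hphile i (Finset.mem_Icc.mpr hi)
          _ ≤ (κ₂ / ((i:ℝ) * L)) ^ a := h1
          _ = κ₂ ^ a / L ^ a * (i:ℝ) ^ (-a) := hsplit
      have hCpos : (0:ℝ) ≤ κ₂ ^ a / L ^ a := by positivity
      have hsum : ∑ i ∈ Finset.Icc 1 K, phiW lam β (p i n) n
          ≤ κ₂ ^ a / L ^ a * ((K : ℝ) ^ (1 - a) / (1 - a)) := by
        calc ∑ i ∈ Finset.Icc 1 K, phiW lam β (p i n) n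
            ≤ ∑ i ∈ Finset.Icc 1 K, κ₂ ^ a / L ^ a * (i:ℝ) ^ (-a) := Finset.sum_le_sum hterm
          _ = κ₂ ^ a / L ^ a * ∑ i ∈ Finset.Icc 1 K, (i:ℝ) ^ (-a) := by
              rw [Finset.mul_sum]
          _ ≤ κ₂ ^ a / L ^ a * ((K : ℝ) ^ (1 - a) / (1 - a)) := by
              apply mul_le_mul_of_nonneg_left (aux_sum_rpow_le hA.le ha1 K) hCpos
      have h1a : (0:ℝ) < 1 - a := by linarith
      have hKpow : (K : ℝ) ^ (1 - a) ≤ ((n:ℝ) / (δ * L)) ^ (1 - a) :=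
        Real.rpow_le_rpow (Nat.cast_nonneg K) hKreal h1a.le
      have hfle : f n ≤ (n:ℝ) ^ (-1 + a) * L *
          (κ₂ ^ a / L ^ a * (((n:ℝ) / (δ * L)) ^ (1 - a) / (1 - a))) := by
        rw [hf]
        simp only [← ha_def, ← hL_def, ← hK_def]
        have hnn : (0:ℝ) ≤ (n:ℝ) ^ (-1 + a) * L := by positivity
        calc (n : ℝ) ^ (-1 + a) * L * ∑ i ∈ Finset.Icc 1 K, phiW lam β (p i n) n
            ≤ (n : ℝ) ^ (-1 + a) * L * (κ₂ ^ a / L ^ a * ((K : ℝ) ^ (1 - a) / (1 - a))) :=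
              mul_le_mul_of_nonneg_left hsum hnn
          _ ≤ _ := by
              apply mul_le_mul_of_nonneg_left _ hnn
              apply mul_le_mul_of_nonneg_left _ hCpos
              exact div_le_div_of_nonneg_right hKpow h1a.le
      refine hfle.trans_eq ?_
      -- algebra: n^(a-1) L κ₂^a L^{-a} (n/(δL))^{1-a} /(1-a) = κ₂^a δ^{a-1}/(1-a)
      have hδL : (0:ℝ) < δ * L := by positivity
      have e1 : ((n:ℝ) / (δ * L)) ^ (1 - a) = (n:ℝ) ^ (1 - a) / (δ * L) ^ (1 - a) :=
        Real.div_rpow hx.le hδL.le (1-a)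
      have e2 : ((δ : ℝ) * L) ^ (1 - a) = δ ^ (1 - a) * L ^ (1 - a) :=
        Real.mul_rpow hδ.le hL.le
      have e3 : (n:ℝ) ^ (-1 + a) * (n:ℝ) ^ (1 - a) = 1 := by
        rw [← Real.rpow_add hx]; norm_num
      have e4 : L * L ^ (1 - a) * L ^ a = L ^ (1-a) * L ^ a * L := by ring
      have e5 : L ^ (1 - a) * L ^ a = L := by
        rw [← Real.rpow_add hL]; norm_num
      have e6 : δ ^ (a - 1) * δ ^ (1 - a) = 1 := by
        rw [← Real.rpow_add hδ]; norm_num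
      have hLa : (0:ℝ) < L ^ a := Real.rpow_pos_of_pos hL a
      have hL1a : (0:ℝ) < L ^ (1 - a) := Real.rpow_pos_of_pos hL (1 - a)
      have hd1a : (0:ℝ) < δ ^ (1 - a) := Real.rpow_pos_of_pos hδ (1 - a)
      have hn1a : (0:ℝ) < (n:ℝ) ^ (1 - a) := Real.rpow_pos_of_pos hx (1 - a)
      have hna1 : (0:ℝ) < (n:ℝ) ^ (-1 + a) := Real.rpow_pos_of_pos hx (-1 + a)
      have e6' : δ ^ (a - 1) = (δ ^ (1 - a))⁻¹ := by
        rw [show a - 1 = -(1 - a) by ring, Real.rpow_neg hδ.le]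
      have e2'' : (n:ℝ) ^ (-1 + a) = ((n:ℝ) ^ (1 - a))⁻¹ := by
        rw [show -1 + a = -(1 - a) by ring, Real.rpow_neg hx.le]
      have e5' : L ^ a = L / L ^ (1 - a) := by
        rw [eq_div_iff hL1a.ne']
        rw [← Real.rpow_add hL]; norm_num
      rw [e1, e2, e2'', e6', e5']
      field_simp
  -- assemble: finitely many small n
  set N₀ : ℕ := max 2 (Nat.ceil (Real.exp (1/δ))) with hN₀
  have hN₀2 : 2 ≤ N₀ := le_max_left _ _
  have hne : (Finset.Icc 2 N₀).Nonempty := ⟨2, Finset.mem_Icc.mpr ⟨le_refl 2, hN₀2⟩⟩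
  set C : ℝ := max (κ₁ ^ a * δ ^ (a - 1)) (κ₂ ^ a * δ ^ (a - 1) / (1 - a)) with hC
  refine ⟨max C ((Finset.Icc 2 N₀).sup' hne f), ?_⟩
  intro n hn
  rcases le_or_gt n N₀ with hle | hgt
  · refine le_trans ?_ (le_max_right _ _)
    exact Finset.le_sup' f (Finset.mem_Icc.mpr ⟨hn, hle⟩)
  · refine le_trans ?_ (le_max_left _ _)
    have h1 : Real.exp (1/δ) ≤ (n : ℝ) := by
      have : Nat.ceil (Real.exp (1/δ)) ≤ n := le_of_lt (lt_of_le_of_lt (le_max_right _ _) hgt)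
      calc Real.exp (1/δ) ≤ (Nat.ceil (Real.exp (1/δ)) : ℝ) := Nat.le_ceil _
        _ ≤ (n : ℝ) := by exact_mod_cast this
    have h2 : 1/δ ≤ Real.log n := by
      calc 1/δ = Real.log (Real.exp (1/δ)) := (Real.log_exp _).symm
        _ ≤ Real.log n := Real.log_le_log (Real.exp_pos _) h1
    have h3 : 1 ≤ δ * Real.log n := by
      have h4 := mul_le_mul_of_nonneg_left h2 hδ.le
      rwa [mul_one_div, div_self hδ.ne'] at h4
    exact core n hn h3
end

section
/- Let λ < 1/2 and β > 0, and let (p_{i,n}) be a Zipf array with constants 0 < κ₁ ≤ κ₂. Then for every δ > 0, the quantity n^{−1+2λ}·(ln n)·Σ_{i=⌈n/(δ·ln n)⌉}^{n} φ(p_{i,n}, n) tends to infinity as n → ∞. -/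
open MeasureTheory Real Filter Topology

/-- Harmonic-type lower bound: `log(n+1) - log m ≤ ∑_{i=m}^n 1/i`. -/
lemma harmonic_icc_lb (m : ℕ) (hm : 1 ≤ m) :
    ∀ n : ℕ, Real.log ((n : ℝ) + 1) - Real.log m ≤ ∑ i ∈ Finset.Icc m n, ((i : ℝ))⁻¹ := by
  intro n
  induction n with
  | zero =>
    rw [Finset.Icc_eq_empty (by omega)]
    simp only [Finset.sum_empty, Nat.cast_zero, zero_add, Real.log_one, zero_sub,
      neg_nonpos]
    exact Real.log_nonneg (by exact_mod_cast hm)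
  | succ n ih =>
    by_cases h : m ≤ n + 1
    · rw [← Finset.insert_Icc_right_eq_Icc_add_one h, Finset.sum_insert (by simp)]
      have hlog : Real.log ((n : ℝ) + 1 + 1) - Real.log ((n : ℝ) + 1) ≤ ((n : ℝ) + 1)⁻¹ := by
        have hn1 : (0 : ℝ) < (n : ℝ) + 1 := by positivity
        rw [← Real.log_div (by positivity) hn1.ne']
        have := Real.log_le_sub_one_of_pos
          (show (0:ℝ) < ((n : ℝ) + 1 + 1) / ((n : ℝ) + 1) by positivity)
        have heq : ((n : ℝ) + 1 + 1) / ((n : ℝ) + 1) - 1 = ((n : ℝ) + 1)⁻¹ := by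
          field_simp
          ring
        linarith [this, heq.le]
      push_cast
      push_cast at ih
      linarith
    · rw [Finset.Icc_eq_empty (by omega)]
      simp only [Finset.sum_empty, sub_nonpos]
      apply Real.log_le_log (by positivity)
      have hmn : (n : ℕ) + 2 ≤ m := by omega
      have : ((n : ℝ)) + 2 ≤ (m : ℝ) := by exact_mod_cast hmn
      push_cast
      linarith

theorem stmt_7 {lam β κ₁ κ₂ : ℝ} (hlam : lam < 1/2) (hβ : 0 < β)
    (p : ℕ → ℕ → ℝ) (hz : IsZipfArray p κ₁ κ₂) :
    ∀ δ : ℝ, 0 < δ →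
      Tendsto (fun n : ℕ =>
          (n : ℝ) ^ (-1 + 2 * lam) * Real.log n *
            ∑ i ∈ Finset.Icc (Nat.ceil ((n : ℝ) / (δ * Real.log n))) n, phiW lam β (p i n) n)
        atTop atTop := by
  obtain ⟨hκ₁, hκ₁₂, hbd⟩ := hz
  intro δ hδ
  have hκ₂pos : 0 < κ₂ := lt_of_lt_of_le hκ₁ hκ₁₂
  set cκ : ℝ := min (κ₁ ^ (2 * lam)) (κ₂ ^ (2 * lam)) with hcκdef
  have hcκ : 0 < cκ :=
    lt_min (Real.rpow_pos_of_pos hκ₁ _) (Real.rpow_pos_of_pos hκ₂pos _)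
  set C : ℝ := δ + (β * κ₁)⁻¹ with hCdef
  have hC : 0 < C := by positivity
  set c : ℝ := cκ * C ^ (-1 + 2 * lam) with hcdef
  have hc : 0 < c := mul_pos hcκ (Real.rpow_pos_of_pos hC _)
  -- the lower-bound function tends to infinity
  have hlogto : Tendsto (fun n : ℕ => Real.log n) atTop atTop :=
    Real.tendsto_log_atTop.comp tendsto_natCast_atTop_atTop
  have hδlog : Tendsto (fun n : ℕ => δ * Real.log n) atTop atTop :=
    hlogto.const_mul_atTop hδ
  have hg : Tendsto (fun n : ℕ => c * (Real.log (δ * Real.log n) - Real.log 2))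
      atTop atTop := by
    apply Tendsto.const_mul_atTop hc
    apply tendsto_atTop_add_const_right
    exact Real.tendsto_log_atTop.comp hδlog
  apply tendsto_atTop_mono' atTop _ hg
  -- eventual conditions
  have hEv3 : ∀ᶠ n : ℕ in atTop, δ * Real.log n ≤ (n : ℝ) := by
    have hlo := Real.isLittleO_log_id_atTop.def (show (0:ℝ) < δ⁻¹ by positivity)
    have hlo' : ∀ᶠ x : ℝ in atTop, δ * Real.log x ≤ x := by
      filter_upwards [hlo, eventually_ge_atTop (1:ℝ)] with x hx hx1
      have hlx : Real.log x ≥ 0 := Real.log_nonneg hx1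
      rw [Real.norm_eq_abs, Real.norm_eq_abs, abs_of_nonneg hlx, id,
        abs_of_nonneg (by linarith : (0:ℝ) ≤ x)] at hx
      calc δ * Real.log x ≤ δ * (δ⁻¹ * x) := by
            exact mul_le_mul_of_nonneg_left hx hδ.le
        _ = x := by field_simp
    exact tendsto_natCast_atTop_atTop.eventually hlo'
  filter_upwards [eventually_ge_atTop 2, hδlog.eventually_ge_atTop 1, hEv3]
    with n h2n hδL hLn
  have hn0 : (0 : ℝ) < n := by
    have : (0:ℕ) < n := by omega
    exact_mod_cast this
  have hL : 0 < Real.log n := Real.log_pos (by exact_mod_cast h2n)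
  set x : ℝ := (n : ℝ) / (δ * Real.log n) with hxdef
  have hx0 : 0 < x := by positivity
  have hx1 : 1 ≤ x := (one_le_div (by positivity)).mpr hLn
  set m : ℕ := Nat.ceil x with hmdef
  have hm1 : 1 ≤ m := Nat.one_le_ceil_iff.mpr hx0
  have hmn : m ≤ n := Nat.ceil_le.mpr (div_le_self hn0.le hδL)
  have hxm : (m : ℝ) ≤ 2 * x := le_trans (Nat.ceil_lt_add_one hx0.le).le (by linarith)
  have hmx : x ≤ (m : ℝ) := Nat.le_ceil x
  -- per-term lower bound
  have key : ∀ i ∈ Finset.Icc m n,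
      c * ((n : ℝ) ^ (1 - 2 * lam) * ((i : ℝ)⁻¹ * (Real.log n)⁻¹)) ≤ phiW lam β (p i n) n := by
    intro i hi
    rw [Finset.mem_Icc] at hi
    have hi1 : 1 ≤ i := le_trans hm1 hi.1
    have hiR : (1 : ℝ) ≤ (i : ℝ) := by exact_mod_cast hi1
    obtain ⟨hp0, hp1, hpl, hpu⟩ := hbd n h2n i hi1 hi.2
    set t : ℝ := (i : ℝ) * Real.log n with htdef
    have ht0 : 0 < t := by positivity
    set q : ℝ := p i n * t with hqdef
    have hq1 : κ₁ ≤ q := (div_le_iff₀ ht0).mp hpl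
    have hq2 : q ≤ κ₂ := (le_div_iff₀ ht0).mp hpu
    have hq0 : 0 < q := lt_of_lt_of_le hκ₁ hq1
    have hpq : p i n = q / t := by field_simp [hqdef]; rfl
    -- first factor
    have f1 : cκ * t ^ (-(2 * lam)) ≤ p i n ^ (2 * lam) := by
      have hqr : cκ ≤ q ^ (2 * lam) := by
        rcases le_total 0 (2 * lam) with h | h
        · exact le_trans (min_le_left _ _) (Real.rpow_le_rpow hκ₁.le hq1 h)
        · exact le_trans (min_le_right _ _) (Real.rpow_le_rpow_of_nonpos hq0 hq2 h)
      calc cκ * t ^ (-(2 * lam)) ≤ q ^ (2 * lam) * t ^ (-(2 * lam)) :=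
            mul_le_mul_of_nonneg_right hqr (Real.rpow_nonneg ht0.le _)
        _ = p i n ^ (2 * lam) := by
            rw [hpq, Real.div_rpow hq0.le ht0.le, Real.rpow_neg ht0.le, div_eq_mul_inv]
    -- second factor
    have hB0 : 0 < 1 + (β * (n : ℝ) * p i n)⁻¹ := by positivity
    have hBle : 1 + (β * (n : ℝ) * p i n)⁻¹ ≤ C * t / n := by
      have h1 : (1 : ℝ) ≤ δ * t / n := by
        have hxi' : x ≤ (i : ℝ) := le_trans hmx (by exact_mod_cast hi.1)
        have : (n : ℝ) ≤ δ * t := by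
          rw [hxdef, div_le_iff₀ (by positivity)] at hxi'
          calc (n : ℝ) ≤ (i : ℝ) * (δ * Real.log n) := hxi'
            _ = δ * t := by rw [htdef]; ring
        rw [le_div_iff₀ hn0]
        linarith
      have h2 : (β * (n : ℝ) * p i n)⁻¹ ≤ (β * κ₁)⁻¹ * t / n := by
        have hk : 0 < β * (n : ℝ) * (κ₁ / t) := by positivity
        have hle : β * (n : ℝ) * (κ₁ / t) ≤ β * (n : ℝ) * p i n :=
          mul_le_mul_of_nonneg_left hpl (by positivity)
        calc (β * (n : ℝ) * p i n)⁻¹ ≤ (β * (n : ℝ) * (κ₁ / t))⁻¹ :=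
              inv_anti₀ hk hle
          _ = (β * κ₁)⁻¹ * t / n := by
              rw [show β * (n : ℝ) * (κ₁ / t) = (β * κ₁) * ((n : ℝ) / t) by ring,
                mul_inv, inv_div]
              ring
      calc 1 + (β * (n : ℝ) * p i n)⁻¹ ≤ δ * t / n + (β * κ₁)⁻¹ * t / n := by linarith
        _ = C * t / n := by rw [hCdef]; ring
    have f2 : C ^ (-1 + 2 * lam) * t ^ (-1 + 2 * lam) * (n : ℝ) ^ (1 - 2 * lam) ≤
        (1 + (β * (n : ℝ) * p i n)⁻¹) ^ (-1 + 2 * lam) := by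
      have h := Real.rpow_le_rpow_of_nonpos hB0 hBle (by linarith : -1 + 2 * lam ≤ 0)
      refine le_trans (le_of_eq ?_) h
      rw [Real.div_rpow (by positivity) hn0.le, Real.mul_rpow hC.le ht0.le,
        div_eq_mul_inv, ← Real.rpow_neg hn0.le,
        show -(-1 + 2 * lam) = 1 - 2 * lam by ring]
    -- combine
    have hcomb := mul_le_mul f1 f2 (by positivity) (Real.rpow_nonneg hp0.le _)
    unfold phiW
    refine le_trans (le_of_eq ?_) hcomb
    have ht' : t ^ (-(2 * lam)) * t ^ (-1 + 2 * lam) = t⁻¹ := by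
      rw [← Real.rpow_add ht0, show -(2 * lam) + (-1 + 2 * lam) = (-1 : ℝ) by ring,
        Real.rpow_neg_one]
    calc c * ((n : ℝ) ^ (1 - 2 * lam) * ((i : ℝ)⁻¹ * (Real.log n)⁻¹))
        = (cκ * C ^ (-1 + 2 * lam)) * (n : ℝ) ^ (1 - 2 * lam) * t⁻¹ := by
          rw [hcdef, htdef, mul_inv]; ring
      _ = cκ * t ^ (-(2 * lam)) *
          (C ^ (-1 + 2 * lam) * t ^ (-1 + 2 * lam) * (n : ℝ) ^ (1 - 2 * lam)) := by
          rw [← ht']; ring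
  -- sum the bound
  have hS0 : (0 : ℝ) ≤ ∑ i ∈ Finset.Icc m n, ((i : ℝ))⁻¹ :=
    Finset.sum_nonneg fun i _ => by positivity
  have hsum := Finset.sum_le_sum key
  have hsumL : ∑ i ∈ Finset.Icc m n,
      c * ((n : ℝ) ^ (1 - 2 * lam) * ((i : ℝ)⁻¹ * (Real.log n)⁻¹)) =
      c * (n : ℝ) ^ (1 - 2 * lam) * (Real.log n)⁻¹ * ∑ i ∈ Finset.Icc m n, ((i : ℝ))⁻¹ := by
    rw [Finset.mul_sum]
    exact Finset.sum_congr rfl fun i _ => by ring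
  have hnn : (n : ℝ) ^ (-1 + 2 * lam) * (n : ℝ) ^ (1 - 2 * lam) = 1 := by
    rw [← Real.rpow_add hn0, show (-1 + 2 * lam) + (1 - 2 * lam) = (0 : ℝ) by ring,
      Real.rpow_zero]
  have hmain : c * (∑ i ∈ Finset.Icc m n, ((i : ℝ))⁻¹) ≤
      (n : ℝ) ^ (-1 + 2 * lam) * Real.log n * ∑ i ∈ Finset.Icc m n, phiW lam β (p i n) n := by
    have h1 : (n : ℝ) ^ (-1 + 2 * lam) * Real.log n *
        (∑ i ∈ Finset.Icc m n, c * ((n : ℝ) ^ (1 - 2 * lam) * ((i : ℝ)⁻¹ * (Real.log n)⁻¹))) ≤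
        (n : ℝ) ^ (-1 + 2 * lam) * Real.log n *
        ∑ i ∈ Finset.Icc m n, phiW lam β (p i n) n := by
      apply mul_le_mul_of_nonneg_left hsum
      positivity
    refine le_trans (le_of_eq ?_) h1
    rw [hsumL]
    have hLinv : Real.log n * (Real.log n)⁻¹ = 1 := mul_inv_cancel₀ hL.ne'
    calc c * (∑ i ∈ Finset.Icc m n, ((i : ℝ))⁻¹)
        = ((n : ℝ) ^ (-1 + 2 * lam) * (n : ℝ) ^ (1 - 2 * lam)) *
          (Real.log n * (Real.log n)⁻¹) * c * (∑ i ∈ Finset.Icc m n, ((i : ℝ))⁻¹) := by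
          rw [hnn, hLinv]; ring
      _ = (n : ℝ) ^ (-1 + 2 * lam) * Real.log n *
          (c * (n : ℝ) ^ (1 - 2 * lam) * (Real.log n)⁻¹ *
          ∑ i ∈ Finset.Icc m n, ((i : ℝ))⁻¹) := by ring
  -- harmonic lower bound and final chain
  have hh := harmonic_icc_lb m hm1 n
  have hlogm : Real.log m ≤ Real.log 2 + Real.log x := by
    have hm0R : (0 : ℝ) < (m : ℝ) := by exact_mod_cast hm1
    calc Real.log m ≤ Real.log (2 * x) := Real.log_le_log hm0R hxm
      _ = Real.log 2 + Real.log x := Real.log_mul two_ne_zero hx0.ne'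
  have hlogx : Real.log x = Real.log n - Real.log (δ * Real.log n) := by
    rw [hxdef, Real.log_div hn0.ne' (by positivity)]
  have hfinal : Real.log (δ * Real.log n) - Real.log 2 ≤
      Real.log ((n : ℝ) + 1) - Real.log m := by
    have hlogn1 : Real.log n ≤ Real.log ((n : ℝ) + 1) :=
      Real.log_le_log hn0 (by linarith)
    linarith [hlogm, hlogx.le, hlogx.ge]
  calc c * (Real.log (δ * Real.log n) - Real.log 2)
      ≤ c * (Real.log ((n : ℝ) + 1) - Real.log m) := by
        exact mul_le_mul_of_nonneg_left hfinal hc.le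
    _ ≤ c * (∑ i ∈ Finset.Icc m n, ((i : ℝ))⁻¹) := mul_le_mul_of_nonneg_left hh hc.le
    _ ≤ _ := hmain
end

section
/- (Generalized weak law of large numbers with a Stolz–Cesàro step.) Let λ < 1/2 and β > 0, let (p_{i,n}) be a Zipf array, and set φ_{i,n} := φ(p_{i,n}, n). On a probability space, for each n ≥ 2 let U_{1,n}, …, U_{n,n} be independent integrable real random variables such that the family {U_{i,n}} is uniformly integrable relative to the weights {φ_{i,n}}. Suppose there is a real number ℓ such that for every ε > 0 there exists δ > 0 with: n·p_{i,n} ≤ δ implies |E[U_{i,n}]/φ_{i,n} − ℓ| ≤ ε, for all n ≥ 2 and 1 ≤ i ≤ n. Then (Σ_{i=1}^{n} U_{i,n})/(Σ_{i=1}^{n} φ_{i,n}) converges to ℓ in probability as n → ∞. -/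
open MeasureTheory Real Filter Topology ProbabilityTheory

lemma phiW_pos {lam β p : ℝ} {n : ℕ} (hp : 0 < p) (hβ : 0 < β) (hn : 0 < (n:ℝ)) :
    0 < phiW lam β p n := by
  have h1 : (0:ℝ) < β * n * p := by positivity
  have : (0:ℝ) < 1 + (β * n * p)⁻¹ := by positivity
  exact mul_pos (rpow_pos_of_pos hp _) (rpow_pos_of_pos this _)

lemma phiW_le_rpow {lam β p : ℝ} {n : ℕ} (hlam : lam < 1/2) (hp : 0 < p) (hβ : 0 < β)
    (hn : 0 < (n:ℝ)) : phiW lam β p n ≤ p ^ (2 * lam) := by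
  have h1 : (0:ℝ) < β * n * p := by positivity
  have hb : (1:ℝ) ≤ 1 + (β * n * p)⁻¹ := by
    have : (0:ℝ) < (β * n * p)⁻¹ := by positivity
    linarith
  have he : -1 + 2 * lam ≤ 0 := by linarith
  have := Real.rpow_le_one_of_one_le_of_nonpos hb he
  calc phiW lam β p n ≤ p ^ (2*lam) * 1 :=
        mul_le_mul_of_nonneg_left this (le_of_lt (rpow_pos_of_pos hp _))
    _ = p ^ (2*lam) := mul_one _

lemma inv_rpow_eq {x e : ℝ} (hx : 0 < x) : (x⁻¹) ^ e = x ^ (-e) := by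
  rw [Real.inv_rpow hx.le, ← Real.rpow_neg hx.le]

lemma phiW_le_linear {lam β p : ℝ} {n : ℕ} (hlam : lam < 1/2) (hp : 0 < p) (hβ : 0 < β)
    (hn : 0 < (n:ℝ)) : phiW lam β p n ≤ β ^ (1 - 2*lam) * (n:ℝ) ^ (1 - 2*lam) * p := by
  have h1 : (0:ℝ) < β * n * p := by positivity
  have hx : (0:ℝ) < (β * n * p)⁻¹ := by positivity
  have he : -1 + 2 * lam ≤ 0 := by linarith
  have h2 : (1 + (β * n * p)⁻¹) ^ (-1 + 2*lam) ≤ ((β * n * p)⁻¹) ^ (-1 + 2*lam) :=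
    Real.rpow_le_rpow_of_nonpos hx (by linarith) he
  have h3 : ((β * n * p)⁻¹) ^ (-1 + 2*lam) = (β * n * p) ^ (1 - 2*lam) := by
    rw [inv_rpow_eq h1]; congr 1; ring
  have h4 : p ^ (2*lam) * (β * n * p) ^ (1 - 2*lam) = β ^ (1-2*lam) * (n:ℝ) ^ (1-2*lam) * p := by
    rw [Real.mul_rpow (by positivity) hp.le, Real.mul_rpow hβ.le hn.le]
    rw [show p ^ (2*lam) * (β ^ (1-2*lam) * (n:ℝ) ^ (1-2*lam) * p ^ (1-2*lam))
        = β ^ (1-2*lam) * (n:ℝ) ^ (1-2*lam) * (p ^ (2*lam) * p ^ (1-2*lam)) by ring,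
      ← Real.rpow_add hp]
    norm_num
  calc phiW lam β p n ≤ p ^ (2*lam) * (β * n * p) ^ (1 - 2*lam) := by
        rw [← h3]; exact mul_le_mul_of_nonneg_left (h3 ▸ (h3 ▸ h2)) (rpow_pos_of_pos hp _).le
    _ = _ := h4

lemma phiW_ge_linear {lam β p c : ℝ} {n : ℕ} (hlam : lam < 1/2) (hp : 0 < p) (hβ : 0 < β)
    (hn : 0 < (n:ℝ)) (hc : 0 < c)
    (h : 1 + (β * n * p)⁻¹ ≤ c * (β * n * p)⁻¹) :
    c ^ (-1 + 2*lam) * (β ^ (1 - 2*lam) * (n:ℝ) ^ (1 - 2*lam) * p) ≤ phiW lam β p n := by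
  have h1 : (0:ℝ) < β * n * p := by positivity
  have hx : (0:ℝ) < (β * n * p)⁻¹ := by positivity
  have he : -1 + 2 * lam ≤ 0 := by linarith
  have h2 : (c * (β * n * p)⁻¹) ^ (-1 + 2*lam) ≤ (1 + (β * n * p)⁻¹) ^ (-1 + 2*lam) :=
    Real.rpow_le_rpow_of_nonpos (by positivity) h he
  have h3 : (c * (β * n * p)⁻¹) ^ (-1 + 2*lam)
      = c ^ (-1 + 2*lam) * (β * n * p) ^ (1 - 2*lam) := by
    rw [Real.mul_rpow hc.le hx.le, inv_rpow_eq h1]; congr 2; ring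
  have h4 : p ^ (2*lam) * (β * n * p) ^ (1 - 2*lam) = β ^ (1-2*lam) * (n:ℝ) ^ (1-2*lam) * p := by
    rw [Real.mul_rpow (by positivity) hp.le, Real.mul_rpow hβ.le hn.le]
    rw [show p ^ (2*lam) * (β ^ (1-2*lam) * (n:ℝ) ^ (1-2*lam) * p ^ (1-2*lam))
        = β ^ (1-2*lam) * (n:ℝ) ^ (1-2*lam) * (p ^ (2*lam) * p ^ (1-2*lam)) by ring,
      ← Real.rpow_add hp]
    norm_num
  calc c ^ (-1 + 2*lam) * (β ^ (1 - 2*lam) * (n:ℝ) ^ (1 - 2*lam) * p)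
      = p ^ (2*lam) * (c * (β * n * p)⁻¹) ^ (-1 + 2*lam) := by rw [h3]; rw [← h4]; ring
    _ ≤ p ^ (2*lam) * (1 + (β * n * p)⁻¹) ^ (-1 + 2*lam) :=
        mul_le_mul_of_nonneg_left h2 (rpow_pos_of_pos hp _).le
    _ = phiW lam β p n := rfl

lemma rpow_le_max {a b x e : ℝ} (ha : 0 < a) (h1 : a ≤ x) (h2 : x ≤ b) :
    x ^ e ≤ max (a ^ e) (b ^ e) := by
  rcases le_or_gt 0 e with he | he
  · exact le_max_of_le_right (Real.rpow_le_rpow (ha.le.trans h1) h2 he)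
  · exact le_max_of_le_left (Real.rpow_le_rpow_of_nonpos ha h1 he.le)

lemma my_antitoneOn_rpow {e : ℝ} (he : e ≤ 0) (M : ℝ) :
    AntitoneOn (fun x : ℝ => x ^ e) (Set.Icc 1 M) := by
  intro x hx y hy hxy
  exact Real.rpow_le_rpow_of_nonpos (lt_of_lt_of_le zero_lt_one hx.1) hxy he

lemma my_sum_shift {M : ℕ} (hM : 1 ≤ M) (f : ℝ → ℝ) :
    ∑ i ∈ Finset.Icc 1 M, f i
      = f 1 + ∑ i ∈ Finset.range (M - 1), f ((1:ℝ) + ((i:ℕ) + 1 : ℕ)) := by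
  rw [← Finset.Ico_add_one_right_eq_Icc, Finset.sum_Ico_eq_sum_range]
  have hM' : M + 1 - 1 = (M - 1) + 1 := by omega
  rw [hM', Finset.sum_range_succ', add_comm]
  have h1 : ((1 + 0 : ℕ) : ℝ) = (1:ℝ) := by norm_num
  have h2 : ∀ i : ℕ, ((1 + (i+1) : ℕ) : ℝ) = (1:ℝ) + ((i:ℕ)+1:ℕ) := by
    intro i; push_cast; ring
  simp only [h1, h2]

lemma antitone_sum_le_integral {M : ℕ} (hM : 1 ≤ M) {f : ℝ → ℝ}
    (hf : AntitoneOn f (Set.Icc (1:ℝ) (M:ℝ))) :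
    ∑ i ∈ Finset.Icc 1 M, f i ≤ f 1 + ∫ x in (1:ℝ)..(M:ℝ), f x := by
  have hcast : ((1:ℝ) + ((M-1:ℕ):ℝ)) = (M:ℝ) := by
    push_cast [Nat.cast_sub hM]; ring
  have key := AntitoneOn.sum_le_integral (x₀ := (1:ℝ)) (a := M - 1) (f := f)
    (by rw [hcast]; exact hf)
  rw [hcast] at key
  rw [my_sum_shift hM f]
  linarith

lemma sum_rpow_le (e : ℝ) (he : -1 < e) : ∃ C : ℝ, 0 < C ∧ ∀ M : ℕ, 1 ≤ M →
    ∑ i ∈ Finset.Icc 1 M, (i:ℝ) ^ e ≤ C * (M:ℝ) ^ (e + 1) := by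
  have he1 : (0:ℝ) < e + 1 := by linarith
  refine ⟨(2:ℝ) ^ (e+1) * (1 + 1/(e+1)), by positivity, fun M hM => ?_⟩
  have hM1 : (1:ℝ) ≤ (M:ℝ) := by exact_mod_cast hM
  have hMrp : (1:ℝ) ≤ (M:ℝ) ^ (e+1) := Real.one_le_rpow hM1 he1.le
  have hpos : (0:ℝ) < 1 + 1/(e+1) := by positivity
  have h2 : (1:ℝ) ≤ (2:ℝ) ^ (e+1) := Real.one_le_rpow one_le_two he1.le
  rcases le_or_gt e 0 with he0 | he0
  · have key := antitone_sum_le_integral hM (my_antitoneOn_rpow he0 (M:ℝ))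
    have hint : ∫ x in (1:ℝ)..(M:ℝ), x ^ e = ((M:ℝ) ^ (e+1) - 1) / (e+1) := by
      rw [integral_rpow (Or.inl he)]
      norm_num
    rw [hint, Real.one_rpow] at key
    have step : 1 + ((M:ℝ) ^ (e+1) - 1)/(e+1) ≤ (1 + 1/(e+1)) * (M:ℝ)^(e+1) := by
      rw [show (1:ℝ) + ((M:ℝ)^(e+1) - 1)/(e+1) = (e + (M:ℝ)^(e+1))/(e+1) by
        field_simp; ring, div_le_iff₀ he1]
      have heq : (1+1/(e+1))*(M:ℝ)^(e+1)*(e+1) = (M:ℝ)^(e+1)*(e+2) := by field_simp; ring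
      rw [heq]
      nlinarith [mul_nonneg (show (0:ℝ) ≤ (M:ℝ)^(e+1)-1 by linarith)
        (show (0:ℝ) ≤ e+1 by linarith)]
    have step2 : (1 + 1/(e+1)) * (M:ℝ)^(e+1) ≤ (2:ℝ)^(e+1) * (1+1/(e+1)) * (M:ℝ)^(e+1) := by
      have : (1 + 1/(e+1)) ≤ (2:ℝ)^(e+1) * (1+1/(e+1)) := le_mul_of_one_le_left hpos.le h2
      exact mul_le_mul_of_nonneg_right this (by positivity)
    linarith
  · have hmono : MonotoneOn (fun x : ℝ => x ^ e) (Set.Icc ((1:ℕ):ℝ) ((M+1:ℕ):ℝ)) := by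
      intro x hx y hy hxy
      have : (1:ℝ) ≤ x := by exact_mod_cast hx.1
      exact Real.rpow_le_rpow (by linarith) hxy he0.le
    have key := MonotoneOn.sum_le_integral_Ico (f := fun x : ℝ => x ^ e)
      (by omega : 1 ≤ M + 1) hmono
    rw [Finset.Ico_add_one_right_eq_Icc] at key
    have hint : ∫ x in ((1:ℕ):ℝ)..((M+1:ℕ):ℝ), x ^ e
        = (((M+1:ℕ):ℝ) ^ (e+1) - 1) / (e+1) := by
      rw [integral_rpow (Or.inl he)]
      norm_num
    rw [hint] at key
    have hle2M : ((M+1:ℕ):ℝ) ≤ 2 * (M:ℝ) := by push_cast; linarith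
    have h2' : ((M+1:ℕ):ℝ) ^ (e+1) ≤ (2:ℝ) ^ (e+1) * (M:ℝ) ^ (e+1) := by
      calc ((M+1:ℕ):ℝ) ^ (e+1) ≤ (2 * (M:ℝ)) ^ (e+1) :=
            Real.rpow_le_rpow (by positivity) hle2M he1.le
        _ = (2:ℝ) ^ (e+1) * (M:ℝ) ^ (e+1) := Real.mul_rpow (by norm_num) (by positivity)
    have key2 : (∑ i ∈ Finset.Icc 1 M, (i:ℝ) ^ e) ≤ (((M+1:ℕ):ℝ) ^ (e+1) - 1)/(e+1) := by
      exact_mod_cast key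
    calc ∑ i ∈ Finset.Icc 1 M, (i:ℝ) ^ e ≤ (((M+1:ℕ):ℝ) ^ (e+1) - 1)/(e+1) := key2
      _ ≤ (2:ℝ) ^ (e+1) * (1 + 1/(e+1)) * (M:ℝ) ^ (e+1) := by
          rw [div_le_iff₀ he1]
          have hA : (1:ℝ) ≤ (2:ℝ)^(e+1) * (M:ℝ)^(e+1) := by nlinarith
          have heq : (2:ℝ)^(e+1) * (1 + 1/(e+1)) * (M:ℝ)^(e+1) * (e+1)
              = (2:ℝ)^(e+1) * (M:ℝ)^(e+1) * (e + 2) := by field_simp; ring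
          rw [heq]
          nlinarith [mul_le_mul_of_nonneg_left (show (1:ℝ) ≤ e + 2 by linarith)
            (show (0:ℝ) ≤ (2:ℝ)^(e+1)*(M:ℝ)^(e+1) by positivity)]

lemma sum_inv_le {M : ℕ} (hM : 1 ≤ M) :
    ∑ i ∈ Finset.Icc 1 M, ((i:ℝ))⁻¹ ≤ 1 + Real.log M := by
  have hM1 : (1:ℝ) ≤ (M:ℝ) := by exact_mod_cast hM
  have hanti : AntitoneOn (fun x : ℝ => x⁻¹) (Set.Icc (1:ℝ) (M:ℝ)) := by
    intro x hx y hy hxy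
    exact inv_anti₀ (lt_of_lt_of_le zero_lt_one hx.1) hxy
  have key := antitone_sum_le_integral hM hanti
  have hint : ∫ x in (1:ℝ)..(M:ℝ), x⁻¹ = Real.log M := by
    rw [integral_inv (by rw [Set.uIcc_of_le hM1]; intro h; exact absurd h.1 (by norm_num))]
    simp
  rw [hint] at key
  simpa using key

lemma log_sub_log_le_sum_inv {a b : ℕ} (ha : 1 ≤ a) (hab : a ≤ b) :
    Real.log b - Real.log a ≤ ∑ i ∈ Finset.Icc a b, ((i:ℝ))⁻¹ := by
  have ha1 : (1:ℝ) ≤ (a:ℝ) := by exact_mod_cast ha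
  have habr : (a:ℝ) ≤ (b:ℝ) := by exact_mod_cast hab
  have hab1 : ((a:ℕ):ℝ) ≤ ((b+1:ℕ):ℝ) := by push_cast; linarith
  have hanti : AntitoneOn (fun x : ℝ => x⁻¹) (Set.Icc ((a:ℕ):ℝ) ((b+1:ℕ):ℝ)) := by
    intro x hx y hy hxy
    exact inv_anti₀ (lt_of_lt_of_le (by linarith [hx.1]) hx.1) hxy
  have key := AntitoneOn.integral_le_sum_Ico (f := fun x : ℝ => x⁻¹) (by omega : a ≤ b + 1) hanti
  rw [Finset.Ico_add_one_right_eq_Icc] at key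
  have hint : ∫ x in ((a:ℕ):ℝ)..((b+1:ℕ):ℝ), x⁻¹ = Real.log ((b+1:ℕ):ℝ) - Real.log a := by
    rw [integral_inv]
    · rw [Real.log_div (by positivity) (by positivity)]
    · rw [Set.uIcc_of_le hab1]
      intro h
      have h1 := h.1
      norm_num at h1
      linarith
  rw [hint] at key
  have hlb : Real.log (b:ℝ) ≤ Real.log ((b+1:ℕ):ℝ) := by
    apply Real.log_le_log (by linarith)
    push_cast; linarith
  have key2 : Real.log ((b+1:ℕ):ℝ) - Real.log a ≤ ∑ i ∈ Finset.Icc a b, ((i:ℝ))⁻¹ := by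
    exact_mod_cast key
  linarith

section
variable {lam β κ₁ κ₂ : ℝ} {p : ℕ → ℕ → ℝ}

lemma phi_ub1 (hlam : lam < 1/2) (hβ : 0 < β) (hz : IsZipfArray p κ₁ κ₂)
    {n i : ℕ} (hn : 2 ≤ n) (hi1 : 1 ≤ i) (hin : i ≤ n) :
    phiW lam β (p i n) n ≤
      (max (κ₁ ^ (2*lam)) (κ₂ ^ (2*lam))) * ((i:ℝ) * Real.log n) ^ (-(2*lam)) := by
  obtain ⟨hκ₁, hκ12, hzb⟩ := hz
  obtain ⟨hp0, hp1, hpl, hpu⟩ := hzb n hn i hi1 hin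
  have hL : (0:ℝ) < Real.log n := Real.log_pos (by exact_mod_cast hn)
  have hiL : (0:ℝ) < (i:ℝ) * Real.log n := by
    have : (0:ℝ) < (i:ℝ) := by exact_mod_cast hi1
    positivity
  have hn0 : (0:ℝ) < (n:ℝ) := by positivity
  have h1 := phiW_le_rpow hlam hp0 hβ hn0
  have h2 : (p i n) ^ (2*lam) ≤ max ((κ₁/((i:ℝ)*Real.log n)) ^ (2*lam))
      ((κ₂/((i:ℝ)*Real.log n)) ^ (2*lam)) :=
    rpow_le_max (by positivity) hpl hpu
  have h3 : ∀ κ : ℝ, 0 < κ → (κ/((i:ℝ)*Real.log n)) ^ (2*lam)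
      = κ ^ (2*lam) * ((i:ℝ)*Real.log n) ^ (-(2*lam)) := by
    intro κ hκ
    rw [Real.div_rpow hκ.le hiL.le, Real.rpow_neg hiL.le, div_eq_mul_inv]
  rw [h3 κ₁ hκ₁, h3 κ₂ (hκ₁.trans_le hκ12)] at h2
  rw [← max_mul_of_nonneg _ _ (by positivity : (0:ℝ) ≤ ((i:ℝ)*Real.log n) ^ (-(2*lam)))] at h2
  linarith

lemma phi_ub2 (hlam : lam < 1/2) (hβ : 0 < β) (hz : IsZipfArray p κ₁ κ₂)
    {n i : ℕ} (hn : 2 ≤ n) (hi1 : 1 ≤ i) (hin : i ≤ n) :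
    phiW lam β (p i n) n ≤
      (β ^ (1-2*lam) * κ₂) * ((n:ℝ) ^ (1-2*lam) * ((i:ℝ) * Real.log n)⁻¹) := by
  obtain ⟨hκ₁, hκ12, hzb⟩ := hz
  obtain ⟨hp0, hp1, hpl, hpu⟩ := hzb n hn i hi1 hin
  have hL : (0:ℝ) < Real.log n := Real.log_pos (by exact_mod_cast hn)
  have hiL : (0:ℝ) < (i:ℝ) * Real.log n := by
    have : (0:ℝ) < (i:ℝ) := by exact_mod_cast hi1
    positivity
  have hn0 : (0:ℝ) < (n:ℝ) := by positivity
  calc phiW lam β (p i n) n ≤ β ^ (1 - 2*lam) * (n:ℝ) ^ (1 - 2*lam) * p i n :=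
        phiW_le_linear hlam hp0 hβ hn0
    _ ≤ β ^ (1 - 2*lam) * (n:ℝ) ^ (1 - 2*lam) * (κ₂/((i:ℝ)*Real.log n)) := by
        apply mul_le_mul_of_nonneg_left hpu (by positivity)
    _ = (β ^ (1-2*lam) * κ₂) * ((n:ℝ) ^ (1-2*lam) * ((i:ℝ) * Real.log n)⁻¹) := by
        field_simp

lemma phi_lb (hlam : lam < 1/2) (hβ : 0 < β) (hz : IsZipfArray p κ₁ κ₂)
    {n i : ℕ} (hn : 2 ≤ n) (hi1 : 1 ≤ i) (hin : i ≤ n)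
    (htail : (n:ℝ) ≤ (i:ℝ) * Real.log n) :
    ((1+β*κ₂) ^ (-1+2*lam) * (β ^ (1-2*lam) * κ₁)) *
      ((n:ℝ) ^ (1-2*lam) * ((i:ℝ) * Real.log n)⁻¹) ≤ phiW lam β (p i n) n := by
  obtain ⟨hκ₁, hκ12, hzb⟩ := hz
  obtain ⟨hp0, hp1, hpl, hpu⟩ := hzb n hn i hi1 hin
  have hL : (0:ℝ) < Real.log n := Real.log_pos (by exact_mod_cast hn)
  have hiL : (0:ℝ) < (i:ℝ) * Real.log n := by
    have : (0:ℝ) < (i:ℝ) := by exact_mod_cast hi1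
    positivity
  have hn0 : (0:ℝ) < (n:ℝ) := by positivity
  have hκ₂ : 0 < κ₂ := hκ₁.trans_le hκ12
  have hnp : (n:ℝ) * p i n ≤ κ₂ := by
    calc (n:ℝ) * p i n ≤ (n:ℝ) * (κ₂/((i:ℝ)*Real.log n)) :=
          mul_le_mul_of_nonneg_left hpu hn0.le
      _ ≤ ((i:ℝ) * Real.log n) * (κ₂/((i:ℝ)*Real.log n)) :=
          mul_le_mul_of_nonneg_right htail (by positivity)
      _ = κ₂ := by field_simp
  have hbnp : (0:ℝ) < β * n * p i n := by positivity
  have hcond : 1 + (β * n * p i n)⁻¹ ≤ (1+β*κ₂) * (β * n * p i n)⁻¹ := by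
    have h1 : β * n * p i n ≤ β * κ₂ := by
      calc β * n * p i n = β * ((n:ℝ) * p i n) := by ring
        _ ≤ β * κ₂ := mul_le_mul_of_nonneg_left hnp hβ.le
    have h2 : (1:ℝ) ≤ (β * κ₂) * (β * n * p i n)⁻¹ := by
      rw [← div_eq_mul_inv, le_div_iff₀ hbnp]
      linarith
    have h3 : (1+β*κ₂) * (β * n * p i n)⁻¹
        = (β*κ₂) * (β * n * p i n)⁻¹ + (β * n * p i n)⁻¹ := by ring
    linarith
  have key := phiW_ge_linear (c := 1+β*κ₂) hlam hp0 hβ hn0 (by positivity) hcond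
  have step : ((1+β*κ₂) ^ (-1+2*lam) * (β ^ (1-2*lam) * κ₁)) *
      ((n:ℝ) ^ (1-2*lam) * ((i:ℝ) * Real.log n)⁻¹)
      ≤ (1+β*κ₂) ^ (-1+2*lam) * (β ^ (1-2*lam) * (n:ℝ) ^ (1-2*lam) * p i n) := by
    have hfac : (0:ℝ) < (1+β*κ₂) ^ (-1+2*lam) * β ^ (1-2*lam) * (n:ℝ) ^ (1-2*lam) := by
      positivity
    have : κ₁ * ((i:ℝ) * Real.log n)⁻¹ ≤ p i n := by
      rw [← div_eq_mul_inv]; exact hpl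
    calc ((1+β*κ₂) ^ (-1+2*lam) * (β ^ (1-2*lam) * κ₁)) *
        ((n:ℝ) ^ (1-2*lam) * ((i:ℝ) * Real.log n)⁻¹)
        = ((1+β*κ₂) ^ (-1+2*lam) * β ^ (1-2*lam) * (n:ℝ) ^ (1-2*lam)) *
          (κ₁ * ((i:ℝ) * Real.log n)⁻¹) := by ring
      _ ≤ ((1+β*κ₂) ^ (-1+2*lam) * β ^ (1-2*lam) * (n:ℝ) ^ (1-2*lam)) * p i n :=
          mul_le_mul_of_nonneg_left this hfac.le
      _ = (1+β*κ₂) ^ (-1+2*lam) * (β ^ (1-2*lam) * (n:ℝ) ^ (1-2*lam) * p i n) := by ring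
  linarith

lemma Phi_lb (hlam : lam < 1/2) (hβ : 0 < β) (hz : IsZipfArray p κ₁ κ₂) :
    ∃ c0 : ℝ, 0 < c0 ∧ ∀ᶠ n : ℕ in atTop,
      c0 * ((n:ℝ) ^ (1-2*lam) * (Real.log n)⁻¹ * Real.log (Real.log n))
        ≤ ∑ i ∈ Finset.Icc 1 n, phiW lam β (p i n) n := by
  obtain ⟨hκ₁, hκ12, hzb⟩ := hz
  have hκ₂ : 0 < κ₂ := hκ₁.trans_le hκ12
  set c3 : ℝ := (1+β*κ₂) ^ (-1+2*lam) * (β ^ (1-2*lam) * κ₁) with hc3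
  have hc3pos : 0 < c3 := by
    apply mul_pos (Real.rpow_pos_of_pos (by positivity) _)
    positivity
  refine ⟨c3/2, by positivity, ?_⟩
  have hlogtend : Tendsto (fun n : ℕ => Real.log n) atTop atTop :=
    Real.tendsto_log_atTop.comp tendsto_natCast_atTop_atTop
  filter_upwards [eventually_ge_atTop 2, hlogtend.eventually_ge_atTop 4] with n hn hL4
  have hn1 : (1:ℝ) < (n:ℝ) := by exact_mod_cast hn
  have hL : (0:ℝ) < Real.log n := Real.log_pos hn1
  have hn0 : (0:ℝ) < (n:ℝ) := by linarith
  have hLn : Real.log n ≤ (n:ℝ) := (Real.log_lt_sub_one_of_pos hn0 (by linarith)).le.trans (by linarith)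
  set L := Real.log n with hLdef
  set a : ℕ := ⌈(n:ℝ)/L⌉₊ with ha
  have ha1 : 1 ≤ a := by
    rw [ha, Nat.one_le_ceil_iff]
    positivity
  have han : a ≤ n := by
    rw [ha, Nat.ceil_le]
    calc (n:ℝ)/L ≤ (n:ℝ)/1 := by
          apply div_le_div_of_nonneg_left hn0.le zero_lt_one
          linarith
      _ = (n:ℝ) := by norm_num
  have hage : (n:ℝ)/L ≤ (a:ℝ) := Nat.le_ceil _
  have hale : (a:ℝ) ≤ (n:ℝ)/L + 1 := (Nat.ceil_lt_add_one (by positivity)).le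
  -- tail sum bound
  have htailsum : c3 * ((n:ℝ) ^ (1-2*lam) * L⁻¹) * (Real.log n - Real.log a)
      ≤ ∑ i ∈ Finset.Icc a n, phiW lam β (p i n) n := by
    have step1 : ∀ i ∈ Finset.Icc a n,
        c3 * ((n:ℝ) ^ (1-2*lam) * L⁻¹) * ((i:ℝ))⁻¹ ≤ phiW lam β (p i n) n := by
      intro i hi
      rw [Finset.mem_Icc] at hi
      have hi1 : 1 ≤ i := le_trans ha1 hi.1
      have htail : (n:ℝ) ≤ (i:ℝ) * L := by
        have : (n:ℝ)/L ≤ (i:ℝ) := le_trans hage (by exact_mod_cast hi.1)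
        calc (n:ℝ) = ((n:ℝ)/L) * L := by field_simp
          _ ≤ (i:ℝ) * L := mul_le_mul_of_nonneg_right this hL.le
      have := phi_lb hlam hβ ⟨hκ₁, hκ12, hzb⟩ hn hi1 hi.2 htail
      have heq : c3 * ((n:ℝ) ^ (1-2*lam) * ((i:ℝ) * L)⁻¹)
          = c3 * ((n:ℝ) ^ (1-2*lam) * L⁻¹) * ((i:ℝ))⁻¹ := by
        rw [mul_inv]; ring
      rw [← hLdef] at this
      linarith [heq ▸ this]
    calc c3 * ((n:ℝ) ^ (1-2*lam) * L⁻¹) * (Real.log n - Real.log a)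
        ≤ c3 * ((n:ℝ) ^ (1-2*lam) * L⁻¹) * ∑ i ∈ Finset.Icc a n, ((i:ℝ))⁻¹ := by
          apply mul_le_mul_of_nonneg_left (log_sub_log_le_sum_inv ha1 han)
          positivity
      _ = ∑ i ∈ Finset.Icc a n, c3 * ((n:ℝ) ^ (1-2*lam) * L⁻¹) * ((i:ℝ))⁻¹ := by
          rw [Finset.mul_sum]
      _ ≤ ∑ i ∈ Finset.Icc a n, phiW lam β (p i n) n := Finset.sum_le_sum step1
  -- log n - log a ≥ (1/2) log L
  have hloga : Real.log a ≤ Real.log n - Real.log L + Real.log 2 := by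
    have h1 : (a:ℝ) ≤ 2*(n:ℝ)/L := by
      have : (1:ℝ) ≤ (n:ℝ)/L := by
        rw [le_div_iff₀ hL]; linarith
      calc (a:ℝ) ≤ (n:ℝ)/L + 1 := hale
        _ ≤ (n:ℝ)/L + (n:ℝ)/L := by linarith
        _ = 2*(n:ℝ)/L := by ring
    calc Real.log a ≤ Real.log (2*(n:ℝ)/L) := by
          have ha0 : (0:ℝ) < (a:ℝ) := by exact_mod_cast ha1
          exact Real.log_le_log ha0 h1
      _ = Real.log 2 + Real.log n - Real.log L := by
          rw [Real.log_div (by positivity) hL.ne', Real.log_mul (by norm_num) hn0.ne']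
          try ring
      _ = Real.log n - Real.log L + Real.log 2 := by ring
  have hlogL : (2:ℝ) * Real.log 2 ≤ Real.log L := by
    have : Real.log 4 ≤ Real.log L := Real.log_le_log (by norm_num) hL4
    have h4 : Real.log 4 = 2 * Real.log 2 := by
      rw [show (4:ℝ) = 2^2 by norm_num, Real.log_pow]
      push_cast; ring
    linarith
  have hlog2pos : (0:ℝ) < Real.log 2 := Real.log_pos (by norm_num)
  have hkey : (1/2) * Real.log L ≤ Real.log n - Real.log a := by
    have : Real.log n - Real.log a ≥ Real.log L - Real.log 2 := by linarith
    linarith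
  have hLLpos : (0:ℝ) < Real.log L := by linarith
  -- combine
  have hsubset : Finset.Icc a n ⊆ Finset.Icc 1 n := by
    apply Finset.Icc_subset_Icc ha1 le_rfl
  have hsum_mono : ∑ i ∈ Finset.Icc a n, phiW lam β (p i n) n
      ≤ ∑ i ∈ Finset.Icc 1 n, phiW lam β (p i n) n := by
    apply Finset.sum_le_sum_of_subset_of_nonneg hsubset
    intro i hi _
    rw [Finset.mem_Icc] at hi
    exact (phiW_pos (hzb n hn i hi.1 hi.2).1 hβ hn0).le
  have hfinal : c3/2 * ((n:ℝ) ^ (1-2*lam) * L⁻¹ * Real.log L)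
      ≤ c3 * ((n:ℝ) ^ (1-2*lam) * L⁻¹) * (Real.log n - Real.log a) := by
    have hpos : (0:ℝ) ≤ c3 * ((n:ℝ) ^ (1-2*lam) * L⁻¹) := by positivity
    calc c3/2 * ((n:ℝ) ^ (1-2*lam) * L⁻¹ * Real.log L)
        = (c3 * ((n:ℝ) ^ (1-2*lam) * L⁻¹)) * ((1/2) * Real.log L) := by ring
      _ ≤ (c3 * ((n:ℝ) ^ (1-2*lam) * L⁻¹)) * (Real.log n - Real.log a) :=
          mul_le_mul_of_nonneg_left hkey hpos
  calc c3/2 * ((n:ℝ) ^ (1-2*lam) * L⁻¹ * Real.log L)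
      ≤ c3 * ((n:ℝ) ^ (1-2*lam) * L⁻¹) * (Real.log n - Real.log a) := hfinal
    _ ≤ ∑ i ∈ Finset.Icc a n, phiW lam β (p i n) n := htailsum
    _ ≤ ∑ i ∈ Finset.Icc 1 n, phiW lam β (p i n) n := hsum_mono

lemma Phi_pos (hβ : 0 < β) (hz : IsZipfArray p κ₁ κ₂) {n : ℕ} (hn : 2 ≤ n) :
    0 < ∑ i ∈ Finset.Icc 1 n, phiW lam β (p i n) n := by
  apply Finset.sum_pos
  · intro i hi
    rw [Finset.mem_Icc] at hi
    exact phiW_pos (hz.2.2 n hn i hi.1 hi.2).1 hβ (by positivity)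
  · exact ⟨1, Finset.mem_Icc.2 ⟨le_rfl, hn.trans' (by norm_num)⟩⟩

lemma head_small (hlam : lam < 1/2) (hβ : 0 < β) (hz : IsZipfArray p κ₁ κ₂) :
    ∀ θ : ℝ, 0 < θ → ∀ δ : ℝ, 0 < δ → ∀ᶠ n : ℕ in atTop,
      ∑ i ∈ (Finset.Icc 1 n).filter (fun i => δ < (n:ℝ) * p i n), phiW lam β (p i n) n
        ≤ θ * ∑ i ∈ Finset.Icc 1 n, phiW lam β (p i n) n := by
  intro θ hθ δ hδ
  obtain ⟨hκ₁, hκ12, hzb⟩ := hz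
  have hκ₂ : 0 < κ₂ := hκ₁.trans_le hκ12
  obtain ⟨c0, hc0, hF1⟩ := Phi_lb hlam hβ ⟨hκ₁, hκ12, hzb⟩
  set K : ℝ := max (κ₁ ^ (2*lam)) (κ₂ ^ (2*lam)) with hK
  have hKpos : 0 < K := lt_max_of_lt_left (Real.rpow_pos_of_pos hκ₁ _)
  obtain ⟨C, hC, hCs⟩ := sum_rpow_le (-(2*lam)) (by linarith)
  set D : ℝ := K * C * (κ₂/δ) ^ (-(2*lam)+1) with hD
  have hDpos : 0 < D := by
    apply mul_pos (mul_pos hKpos hC) (Real.rpow_pos_of_pos (by positivity) _)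
  have hlogtend : Tendsto (fun n : ℕ => Real.log n) atTop atTop :=
    Real.tendsto_log_atTop.comp tendsto_natCast_atTop_atTop
  have hloglog : Tendsto (fun n : ℕ => Real.log (Real.log n)) atTop atTop :=
    Real.tendsto_log_atTop.comp hlogtend
  filter_upwards [eventually_ge_atTop 2, hF1, hloglog.eventually_ge_atTop (D/(θ*c0)),
    hlogtend.eventually_ge_atTop 1] with n hn hΦ hLL hL1
  have hn1 : (1:ℝ) < (n:ℝ) := by exact_mod_cast hn
  have hL : (0:ℝ) < Real.log n := Real.log_pos hn1
  have hn0 : (0:ℝ) < (n:ℝ) := by linarith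
  set L := Real.log n with hLdef
  set Φ := ∑ i ∈ Finset.Icc 1 n, phiW lam β (p i n) n with hΦdef
  have hΦpos : 0 < Φ := Phi_pos hβ ⟨hκ₁, hκ12, hzb⟩ hn
  set A := (Finset.Icc 1 n).filter (fun i => δ < (n:ℝ) * p i n) with hA
  set m : ℕ := min n ⌊κ₂*(n:ℝ)/(δ*L)⌋₊ with hm
  have hsub : A ⊆ Finset.Icc 1 m := by
    intro i hi
    rw [hA, Finset.mem_filter, Finset.mem_Icc] at hi
    obtain ⟨⟨hi1, hin⟩, hip⟩ := hi
    have hi0 : (0:ℝ) < (i:ℝ) := by exact_mod_cast hi1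
    obtain ⟨hp0, hp1, hpl, hpu⟩ := hzb n hn i hi1 hin
    have h1 : δ * ((i:ℝ)*L) < κ₂ * n := by
      have h2 : (n:ℝ) * p i n ≤ (n:ℝ) * (κ₂/((i:ℝ)*L)) := by
        apply mul_le_mul_of_nonneg_left hpu hn0.le
      have h3 : δ < (n:ℝ) * (κ₂/((i:ℝ)*L)) := lt_of_lt_of_le hip h2
      have hiL : (0:ℝ) < (i:ℝ)*L := by positivity
      calc δ * ((i:ℝ)*L) < ((n:ℝ) * (κ₂/((i:ℝ)*L))) * ((i:ℝ)*L) :=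
            mul_lt_mul_of_pos_right h3 hiL
        _ = κ₂ * n := by field_simp
    have h4 : (i:ℝ) ≤ κ₂*(n:ℝ)/(δ*L) := by
      rw [le_div_iff₀ (by positivity)]
      calc (i:ℝ) * (δ*L) = δ * ((i:ℝ)*L) := by ring
        _ ≤ κ₂ * n := h1.le
    rw [Finset.mem_Icc]
    refine ⟨hi1, le_min hin (Nat.le_floor h4)⟩
  rcases Finset.eq_empty_or_nonempty A with hAe | hAne
  · rw [hAe, Finset.sum_empty]
    positivity
  · have hm1 : 1 ≤ m := by
      obtain ⟨i, hi⟩ := hAne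
      have := hsub hi
      rw [Finset.mem_Icc] at this
      have hi1 : 1 ≤ i := by
        rw [hA, Finset.mem_filter, Finset.mem_Icc] at hi
        exact hi.1.1
      omega
    have hmn : m ≤ n := min_le_left _ _
    have hmle : (m:ℝ) ≤ κ₂*(n:ℝ)/(δ*L) := by
      calc (m:ℝ) ≤ (⌊κ₂*(n:ℝ)/(δ*L)⌋₊ : ℝ) := by exact_mod_cast min_le_right _ _
        _ ≤ κ₂*(n:ℝ)/(δ*L) := Nat.floor_le (by positivity)
    -- bound the head sum
    have step1 : ∑ i ∈ A, phiW lam β (p i n) n ≤ ∑ i ∈ Finset.Icc 1 m, phiW lam β (p i n) n := by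
      apply Finset.sum_le_sum_of_subset_of_nonneg hsub
      intro i hi _
      rw [Finset.mem_Icc] at hi
      exact (phiW_pos (hzb n hn i hi.1 (le_trans hi.2 hmn)).1 hβ hn0).le
    have step2 : ∑ i ∈ Finset.Icc 1 m, phiW lam β (p i n) n
        ≤ K * L ^ (-(2*lam)) * ∑ i ∈ Finset.Icc 1 m, (i:ℝ) ^ (-(2*lam)) := by
      rw [Finset.mul_sum]
      apply Finset.sum_le_sum
      intro i hi
      rw [Finset.mem_Icc] at hi
      have hi0 : (0:ℝ) ≤ (i:ℝ) := by positivity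
      have hsplit : ((i:ℝ) * L) ^ (-(2*lam)) = (i:ℝ) ^ (-(2*lam)) * L ^ (-(2*lam)) :=
        Real.mul_rpow hi0 hL.le
      calc phiW lam β (p i n) n ≤ K * ((i:ℝ) * L) ^ (-(2*lam)) :=
            phi_ub1 hlam hβ ⟨hκ₁, hκ12, hzb⟩ hn hi.1 (le_trans hi.2 hmn)
        _ = K * L ^ (-(2*lam)) * ((i:ℝ) ^ (-(2*lam))) := by rw [hsplit]; ring
    have step3 : ∑ i ∈ Finset.Icc 1 m, (i:ℝ) ^ (-(2*lam)) ≤ C * (m:ℝ) ^ (-(2*lam)+1) :=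
      hCs m hm1
    have step4 : (m:ℝ) ^ (-(2*lam)+1) ≤ (κ₂*(n:ℝ)/(δ*L)) ^ (-(2*lam)+1) :=
      Real.rpow_le_rpow (by positivity) hmle (by linarith)
    have hsplit2 : (κ₂*(n:ℝ)/(δ*L)) ^ (-(2*lam)+1)
        = (κ₂/δ) ^ (-(2*lam)+1) * ((n:ℝ) ^ (-(2*lam)+1) * (L ^ (-(2*lam)+1))⁻¹) := by
      rw [show κ₂*(n:ℝ)/(δ*L) = (κ₂/δ) * ((n:ℝ)/L) by field_simp <;> ring,
        Real.mul_rpow (by positivity) (by positivity),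
        Real.div_rpow hn0.le hL.le]
      ring
    have hLcombine : L ^ (-(2*lam)) * (L ^ (-(2*lam)+1))⁻¹ = L⁻¹ := by
      rw [← Real.rpow_neg hL.le, ← Real.rpow_add hL,
        show -(2*lam) + -(-(2*lam)+1) = -1 by ring, Real.rpow_neg_one]
    have headbd : ∑ i ∈ A, phiW lam β (p i n) n ≤ D * ((n:ℝ) ^ (-(2*lam)+1) * L⁻¹) := by
      have c1 : ∑ i ∈ A, phiW lam β (p i n) n
          ≤ K * L ^ (-(2*lam)) * (C * (κ₂*(n:ℝ)/(δ*L)) ^ (-(2*lam)+1)) := by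
        have h5 : K * L ^ (-(2*lam)) * ∑ i ∈ Finset.Icc 1 m, (i:ℝ) ^ (-(2*lam))
            ≤ K * L ^ (-(2*lam)) * (C * (m:ℝ) ^ (-(2*lam)+1)) :=
          mul_le_mul_of_nonneg_left step3 (by positivity)
        have h6 : K * L ^ (-(2*lam)) * (C * (m:ℝ) ^ (-(2*lam)+1))
            ≤ K * L ^ (-(2*lam)) * (C * (κ₂*(n:ℝ)/(δ*L)) ^ (-(2*lam)+1)) := by
          apply mul_le_mul_of_nonneg_left (mul_le_mul_of_nonneg_left step4 hC.le)
          positivity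
        linarith
      calc ∑ i ∈ A, phiW lam β (p i n) n
          ≤ K * L ^ (-(2*lam)) * (C * (κ₂*(n:ℝ)/(δ*L)) ^ (-(2*lam)+1)) := c1
        _ = D * ((n:ℝ) ^ (-(2*lam)+1) * L⁻¹) := by
            rw [hsplit2, hD, ← hLcombine]; ring
    -- compare with Phi
    have hXpos : (0:ℝ) < (n:ℝ) ^ (1-2*lam) * L⁻¹ := by positivity
    have hexp : (n:ℝ) ^ (-(2*lam)+1) = (n:ℝ) ^ (1-2*lam) := by
      congr 1; ring
    have hfinal : D * ((n:ℝ) ^ (1-2*lam) * L⁻¹) ≤ θ * Φ := by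
      have hLL' : D ≤ θ * c0 * Real.log L := by
        rw [div_le_iff₀ (by positivity)] at hLL
        calc D ≤ Real.log L * (θ * c0) := hLL
          _ = θ * c0 * Real.log L := by ring
      have hlogLpos : (0:ℝ) ≤ Real.log L := Real.log_nonneg hL1
      calc D * ((n:ℝ) ^ (1-2*lam) * L⁻¹)
          ≤ (θ * c0 * Real.log L) * ((n:ℝ) ^ (1-2*lam) * L⁻¹) :=
            mul_le_mul_of_nonneg_right hLL' hXpos.le
        _ = θ * (c0 * ((n:ℝ) ^ (1-2*lam) * L⁻¹ * Real.log L)) := by ring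
        _ ≤ θ * Φ := mul_le_mul_of_nonneg_left hΦ hθ.le
    calc ∑ i ∈ A, phiW lam β (p i n) n ≤ D * ((n:ℝ) ^ (-(2*lam)+1) * L⁻¹) := headbd
      _ = D * ((n:ℝ) ^ (1-2*lam) * L⁻¹) := by rw [hexp]
      _ ≤ θ * Φ := hfinal

lemma sq_small (hlam : lam < 1/2) (hβ : 0 < β) (hz : IsZipfArray p κ₁ κ₂) :
    ∀ θ : ℝ, 0 < θ → ∀ᶠ n : ℕ in atTop,
      ∑ i ∈ Finset.Icc 1 n, (phiW lam β (p i n) n)^2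
        ≤ θ * (∑ i ∈ Finset.Icc 1 n, phiW lam β (p i n) n)^2 := by
  intro θ hθ
  obtain ⟨hκ₁, hκ12, hzb⟩ := hz
  have hκ₂ : 0 < κ₂ := hκ₁.trans_le hκ12
  obtain ⟨c0, hc0, hF1⟩ := Phi_lb hlam hβ ⟨hκ₁, hκ12, hzb⟩
  set K : ℝ := max (κ₁ ^ (2*lam)) (κ₂ ^ (2*lam)) with hK
  have hKpos : 0 < K := lt_max_of_lt_left (Real.rpow_pos_of_pos hκ₁ _)
  set D2 : ℝ := β ^ (1-2*lam) * κ₂ with hD2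
  have hD2pos : 0 < D2 := mul_pos (Real.rpow_pos_of_pos hβ _) hκ₂
  set mm : ℝ := max (-(2*lam)) 0 with hmm
  set rr : ℝ := min (1-2*lam) 1 with hrr
  have hmm0 : 0 ≤ mm := le_max_right _ _
  have hrr0 : 0 < rr := by
    rw [hrr]; apply lt_min (by linarith) one_pos
  have hsumexp : rr + mm = 1 - 2*lam := by
    rcases le_total (-(2*lam)) 0 with h | h
    · rw [hmm, hrr, max_eq_right h, min_eq_left (by linarith)]; ring
    · rw [hmm, hrr, max_eq_left h, min_eq_right (by linarith)]; ring
  -- littleO : (log x)^(2-2lam) vs x^rr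
  have hlo := isLittleO_log_rpow_rpow_atTop (2-2*lam) hrr0
  have hc' : (0:ℝ) < θ*c0^2/(2*K*D2) := by positivity
  have hev0 : ∀ᶠ x : ℝ in atTop,
      2*K*D2 * (Real.log x) ^ (2-2*lam) ≤ θ*c0^2 * x ^ rr := by
    have := hlo.def hc'
    filter_upwards [this, eventually_ge_atTop (1:ℝ)] with x hx hx1
    have hlx : (0:ℝ) ≤ Real.log x := Real.log_nonneg hx1
    rw [Real.norm_eq_abs, Real.norm_eq_abs, abs_of_nonneg (Real.rpow_nonneg hlx _),
      abs_of_nonneg (Real.rpow_nonneg (by linarith : (0:ℝ) ≤ x) _)] at hx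
    have h2KD : (0:ℝ) < 2*K*D2 := by positivity
    calc 2*K*D2 * (Real.log x) ^ (2-2*lam) ≤ 2*K*D2 * (θ*c0^2/(2*K*D2) * x ^ rr) :=
          mul_le_mul_of_nonneg_left hx h2KD.le
      _ = θ*c0^2 * x ^ rr := by field_simp
  have hev : ∀ᶠ n : ℕ in atTop,
      2*K*D2 * (Real.log n) ^ (2-2*lam) ≤ θ*c0^2 * (n:ℝ) ^ rr :=
    tendsto_natCast_atTop_atTop.eventually hev0
  have hlogtend : Tendsto (fun n : ℕ => Real.log n) atTop atTop :=
    Real.tendsto_log_atTop.comp tendsto_natCast_atTop_atTop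
  have hloglog : Tendsto (fun n : ℕ => Real.log (Real.log n)) atTop atTop :=
    Real.tendsto_log_atTop.comp hlogtend
  filter_upwards [eventually_ge_atTop 2, hF1, hev, hlogtend.eventually_ge_atTop 1,
    hloglog.eventually_ge_atTop 1]
    with n hn hΦ hevn hL1 hLL1
  have hn1 : (1:ℝ) < (n:ℝ) := by exact_mod_cast hn
  have hn0 : (0:ℝ) < (n:ℝ) := by linarith
  have hL : (0:ℝ) < Real.log n := Real.log_pos hn1
  set L := Real.log n with hLdef
  set Φ := ∑ i ∈ Finset.Icc 1 n, phiW lam β (p i n) n with hΦdef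
  -- pointwise square bound
  have hpt : ∀ i ∈ Finset.Icc 1 n, (phiW lam β (p i n) n)^2
      ≤ (K * D2 * ((n:ℝ)^(1-2*lam) * (n:ℝ)^mm * (L^(-(2*lam)) * L⁻¹))) * ((i:ℝ))⁻¹ := by
    intro i hi
    rw [Finset.mem_Icc] at hi
    have hi1 : (1:ℝ) ≤ (i:ℝ) := by exact_mod_cast hi.1
    have hi0 : (0:ℝ) < (i:ℝ) := by linarith
    have hin2 : (i:ℝ) ≤ (n:ℝ) := by exact_mod_cast hi.2
    have hφ0 : 0 ≤ phiW lam β (p i n) n :=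
      (phiW_pos (hzb n hn i hi.1 hi.2).1 hβ hn0).le
    have h1 := phi_ub1 hlam hβ ⟨hκ₁, hκ12, hzb⟩ hn hi.1 hi.2
    have h2 := phi_ub2 hlam hβ ⟨hκ₁, hκ12, hzb⟩ hn hi.1 hi.2
    have hub1nn : 0 ≤ K * ((i:ℝ) * L) ^ (-(2*lam)) := by positivity
    have hsq : (phiW lam β (p i n) n)^2
        ≤ (K * ((i:ℝ) * L) ^ (-(2*lam))) * ((D2) * ((n:ℝ) ^ (1-2*lam) * ((i:ℝ) * L)⁻¹)) := by
      rw [sq]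
      exact mul_le_mul h1 h2 hφ0 hub1nn
    have hiexp : ((i:ℝ)) ^ (-(2*lam)) ≤ (n:ℝ) ^ mm := by
      rcases le_total 0 (-(2*lam)) with h | h
      · calc ((i:ℝ)) ^ (-(2*lam)) ≤ ((n:ℝ)) ^ (-(2*lam)) :=
              Real.rpow_le_rpow hi0.le hin2 h
          _ ≤ (n:ℝ) ^ mm := Real.rpow_le_rpow_of_exponent_le hn1.le (le_max_left _ _)
      · calc ((i:ℝ)) ^ (-(2*lam)) ≤ ((i:ℝ)) ^ (0:ℝ) :=
              Real.rpow_le_rpow_of_exponent_le hi1 h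
          _ = (1:ℝ) := Real.rpow_zero _
          _ = (n:ℝ) ^ (0:ℝ) := (Real.rpow_zero _).symm
          _ ≤ (n:ℝ) ^ mm := Real.rpow_le_rpow_of_exponent_le hn1.le hmm0
    have hsplit : ((i:ℝ) * L) ^ (-(2*lam)) = (i:ℝ) ^ (-(2*lam)) * L ^ (-(2*lam)) :=
      Real.mul_rpow hi0.le hL.le
    have hsplitinv : ((i:ℝ) * L)⁻¹ = (i:ℝ)⁻¹ * L⁻¹ := by rw [mul_inv]
    calc (phiW lam β (p i n) n)^2
        ≤ (K * ((i:ℝ) * L) ^ (-(2*lam))) * ((D2) * ((n:ℝ) ^ (1-2*lam) * ((i:ℝ) * L)⁻¹)) := hsq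
      _ = (K * D2 * ((n:ℝ)^(1-2*lam) * ((i:ℝ)) ^ (-(2*lam)) * (L^(-(2*lam)) * L⁻¹))) * ((i:ℝ))⁻¹ := by
          rw [hsplit, hsplitinv]; ring
      _ ≤ (K * D2 * ((n:ℝ)^(1-2*lam) * (n:ℝ)^mm * (L^(-(2*lam)) * L⁻¹))) * ((i:ℝ))⁻¹ := by
          apply mul_le_mul_of_nonneg_right _ (by positivity)
          apply mul_le_mul_of_nonneg_left _ (by positivity : (0:ℝ) ≤ K * D2)
          apply mul_le_mul_of_nonneg_right _ (by positivity)
          exact mul_le_mul_of_nonneg_left hiexp (by positivity)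
  -- sum bound
  have hsum1 : ∑ i ∈ Finset.Icc 1 n, (phiW lam β (p i n) n)^2
      ≤ (K * D2 * ((n:ℝ)^(1-2*lam) * (n:ℝ)^mm * (L^(-(2*lam)) * L⁻¹))) * (1 + L) := by
    calc ∑ i ∈ Finset.Icc 1 n, (phiW lam β (p i n) n)^2
        ≤ ∑ i ∈ Finset.Icc 1 n,
            (K * D2 * ((n:ℝ)^(1-2*lam) * (n:ℝ)^mm * (L^(-(2*lam)) * L⁻¹))) * ((i:ℝ))⁻¹ :=
          Finset.sum_le_sum hpt
      _ = (K * D2 * ((n:ℝ)^(1-2*lam) * (n:ℝ)^mm * (L^(-(2*lam)) * L⁻¹)))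
            * ∑ i ∈ Finset.Icc 1 n, ((i:ℝ))⁻¹ := by rw [← Finset.mul_sum]
      _ ≤ _ := by
          apply mul_le_mul_of_nonneg_left (sum_inv_le (by omega)) (by positivity)
  have h1L : (1 + L) ≤ 2*L := by linarith
  have hsum2 : ∑ i ∈ Finset.Icc 1 n, (phiW lam β (p i n) n)^2
      ≤ 2*K*D2 * ((n:ℝ)^(1-2*lam) * (n:ℝ)^mm * L^(-(2*lam))) := by
    have hnn : (0:ℝ) ≤ K * D2 * ((n:ℝ)^(1-2*lam) * (n:ℝ)^mm * (L^(-(2*lam)) * L⁻¹)) := by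
      positivity
    calc ∑ i ∈ Finset.Icc 1 n, (phiW lam β (p i n) n)^2
        ≤ (K * D2 * ((n:ℝ)^(1-2*lam) * (n:ℝ)^mm * (L^(-(2*lam)) * L⁻¹))) * (2*L) :=
          le_trans hsum1 (mul_le_mul_of_nonneg_left h1L hnn)
      _ = 2*K*D2 * ((n:ℝ)^(1-2*lam) * (n:ℝ)^mm * (L^(-(2*lam)) * (L⁻¹ * L))) := by ring
      _ = 2*K*D2 * ((n:ℝ)^(1-2*lam) * (n:ℝ)^mm * L^(-(2*lam))) := by
          rw [inv_mul_cancel₀ hL.ne', mul_one]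
  -- use littleO bound:  L^(-(2lam)) = L^(-2) * L^(2-2lam)
  have hLsplit : L^(-(2*lam)) = (L⁻¹*L⁻¹) * L^(2-2*lam) := by
    rw [show L⁻¹*L⁻¹ = L^((-1):ℝ) * L^((-1):ℝ) by rw [Real.rpow_neg_one],
      ← Real.rpow_add hL, ← Real.rpow_add hL]
    congr 1; ring
  have hnrrmm : (n:ℝ)^rr * (n:ℝ)^mm = (n:ℝ)^(1-2*lam) := by
    rw [← Real.rpow_add hn0, hsumexp]
  have hmain : 2*K*D2 * ((n:ℝ)^(1-2*lam) * (n:ℝ)^mm * L^(-(2*lam)))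
      ≤ θ * (c0 * ((n:ℝ)^(1-2*lam) * L⁻¹))^2 := by
    have hstep : 2*K*D2 * L^(2-2*lam) ≤ θ*c0^2 * (n:ℝ)^rr := hevn
    have hnn2 : (0:ℝ) ≤ (n:ℝ)^(1-2*lam) * (n:ℝ)^mm * (L⁻¹*L⁻¹) := by positivity
    calc 2*K*D2 * ((n:ℝ)^(1-2*lam) * (n:ℝ)^mm * L^(-(2*lam)))
        = ((n:ℝ)^(1-2*lam) * (n:ℝ)^mm * (L⁻¹*L⁻¹)) * (2*K*D2 * L^(2-2*lam)) := by
          rw [hLsplit]; ring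
      _ ≤ ((n:ℝ)^(1-2*lam) * (n:ℝ)^mm * (L⁻¹*L⁻¹)) * (θ*c0^2 * (n:ℝ)^rr) :=
          mul_le_mul_of_nonneg_left hstep hnn2
      _ = θ * c0^2 * ((n:ℝ)^(1-2*lam) * ((n:ℝ)^rr * (n:ℝ)^mm) * (L⁻¹*L⁻¹)) := by ring
      _ = θ * c0^2 * ((n:ℝ)^(1-2*lam) * (n:ℝ)^(1-2*lam) * (L⁻¹*L⁻¹)) := by rw [hnrrmm]
      _ = θ * (c0 * ((n:ℝ)^(1-2*lam) * L⁻¹))^2 := by ring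
  -- compare with Φ²
  have hY : 0 ≤ c0 * ((n:ℝ)^(1-2*lam) * L⁻¹) := by positivity
  have hΦge : c0 * ((n:ℝ)^(1-2*lam) * L⁻¹) ≤ Φ := by
    have h1 : c0 * ((n:ℝ)^(1-2*lam) * L⁻¹) ≤ c0 * ((n:ℝ)^(1-2*lam) * L⁻¹ * Real.log L) := by
      nlinarith [Real.rpow_pos_of_pos hn0 (1-2*lam), inv_pos.2 hL, hc0, hLL1,
        mul_pos (Real.rpow_pos_of_pos hn0 (1-2*lam)) (inv_pos.2 hL)]
    exact le_trans h1 hΦ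
  have hΦsq : (c0 * ((n:ℝ)^(1-2*lam) * L⁻¹))^2 ≤ Φ^2 := by
    apply pow_le_pow_left₀ hY hΦge
  calc ∑ i ∈ Finset.Icc 1 n, (phiW lam β (p i n) n)^2
      ≤ 2*K*D2 * ((n:ℝ)^(1-2*lam) * (n:ℝ)^mm * L^(-(2*lam))) := hsum2
    _ ≤ θ * (c0 * ((n:ℝ)^(1-2*lam) * L⁻¹))^2 := hmain
    _ ≤ θ * Φ^2 := mul_le_mul_of_nonneg_left hΦsq hθ.le

end

section
variable {Ω : Type*} [MeasurableSpace Ω] (P : Measure Ω) [IsProbabilityMeasure P]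

lemma integral_abs_le_add (f : Ω → ℝ) (hi : Integrable f P) {a b : ℝ} (ha : 0 ≤ a)
    (hs : MeasurableSet {ω | a < |f ω|})
    (h : ∫ ω in {ω | a < |f ω|}, |f ω| ∂P ≤ b) :
    ∫ ω, |f ω| ∂P ≤ a + b := by
  set s := {ω | a < |f ω|} with hsdef
  have hpt : ∀ ω, |f ω| ≤ a + s.indicator (fun ω => |f ω|) ω := by
    intro ω
    by_cases hω : ω ∈ s
    · rw [Set.indicator_of_mem hω]
      linarith
    · rw [Set.indicator_of_notMem hω]
      rw [hsdef, Set.mem_setOf_eq, not_lt] at hω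
      linarith
  have hind : Integrable (s.indicator (fun ω => |f ω|)) P := hi.abs.indicator hs
  calc ∫ ω, |f ω| ∂P ≤ ∫ ω, (a + s.indicator (fun ω' => |f ω'|) ω) ∂P := by
        apply integral_mono hi.abs ((integrable_const a).add hind) hpt
    _ = a + ∫ ω, s.indicator (fun ω' => |f ω'|) ω ∂P := by
        rw [integral_add (integrable_const a) hind, integral_const]
        simp [measure_univ]
    _ = a + ∫ ω in s, |f ω| ∂P := by rw [integral_indicator hs]
    _ ≤ a + b := by linarith

lemma core_bound (n : ℕ) (hn : 2 ≤ n) (U : ℕ → Ω → ℝ) (w : ℕ → ℝ) (N N₀ ε ηr ℓ : ℝ)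
    (hε : 0 < ε) (hηr : 0 < ηr) (hN : 0 < N) (hN₀ : 0 < N₀)
    (hw : ∀ i ∈ Finset.Icc 1 n, 0 < w i)
    (hmeas : ∀ i, Measurable (U i))
    (hint : ∀ i ∈ Finset.Icc 1 n, Integrable (U i) P)
    (hpair : ∀ i ∈ Finset.Icc 1 n, ∀ j ∈ Finset.Icc 1 n, i ≠ j → IndepFun (U i) (U j) P)
    (htr2 : ∀ i ∈ Finset.Icc 1 n,
       ∫ ω in {ω | N₀ * w i < |U i ω|}, |U i ω| ∂P ≤ w i)
    (hW2 : N * (N₀+1) * ∑ i ∈ Finset.Icc 1 n, (w i)^2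
       ≤ (ηr/2) * ((ε/4) * ∑ i ∈ Finset.Icc 1 n, w i)^2)
    (htr : ∑ i ∈ Finset.Icc 1 n, ∫ ω in {ω | N * w i < |U i ω|}, |U i ω| ∂P
       ≤ min (ε/8) ((ε/4)*(ηr/2)) * ∑ i ∈ Finset.Icc 1 n, w i)
    (hmeansum : ∑ i ∈ Finset.Icc 1 n, |(∫ ω, U i ω ∂P) - ℓ * w i|
       ≤ (ε/4) * ∑ i ∈ Finset.Icc 1 n, w i) :
    P {ω | ε ≤ |(∑ i ∈ Finset.Icc 1 n, U i ω) / (∑ i ∈ Finset.Icc 1 n, w i) - ℓ|}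
      ≤ ENNReal.ofReal ηr := by
  classical
  set W := ∑ i ∈ Finset.Icc 1 n, w i with hWdef
  have hWpos : 0 < W := Finset.sum_pos hw ⟨1, Finset.mem_Icc.2 ⟨le_rfl, by omega⟩⟩
  -- truncation
  set g : ℕ → ℝ → ℝ := fun i => Set.indicator ({x : ℝ | N * w i < |x|})ᶜ id with hgdef
  have hgmeas : ∀ i, Measurable (g i) := by
    intro i
    exact measurable_id.indicator (measurableSet_lt measurable_const measurable_abs).compl
  set V : ℕ → Ω → ℝ := fun i => g i ∘ U i with hVdef
  have hVmeas : ∀ i, Measurable (V i) := fun i => (hgmeas i).comp (hmeas i)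
  have hsmeas : ∀ i, MeasurableSet {ω | N * w i < |U i ω|} := by
    intro i
    exact measurableSet_lt measurable_const (hmeas i).abs
  have hs0meas : ∀ i, MeasurableSet {ω | N₀ * w i < |U i ω|} := by
    intro i
    exact measurableSet_lt measurable_const (hmeas i).abs
  have hVeq : ∀ i, V i = Set.indicator ({ω | N * w i < |U i ω|})ᶜ (U i) := by
    intro i
    funext ω
    by_cases hω : N * w i < |U i ω|
    · have h1 : U i ω ∈ {x : ℝ | N * w i < |x|} := hω
      have h2 : ω ∈ {ω | N * w i < |U i ω|} := hω
      simp only [hVdef, Function.comp_apply, hgdef]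
      rw [Set.indicator_of_notMem (by simpa using h1),
        Set.indicator_of_notMem (by simpa using h2)]
    · have h1 : U i ω ∈ ({x : ℝ | N * w i < |x|})ᶜ := hω
      have h2 : ω ∈ ({ω | N * w i < |U i ω|})ᶜ := hω
      simp only [hVdef, Function.comp_apply, hgdef]
      rw [Set.indicator_of_mem h1, Set.indicator_of_mem h2, id]
  have hVint : ∀ i ∈ Finset.Icc 1 n, Integrable (V i) P := by
    intro i hi
    rw [hVeq i]
    exact (hint i hi).indicator (hsmeas i).compl
  have hVbd : ∀ i ∈ Finset.Icc 1 n, ∀ ω, |V i ω| ≤ N * w i := by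
    intro i hi ω
    rw [hVeq i]
    by_cases hω : ω ∈ ({ω | N * w i < |U i ω|})ᶜ
    · rw [Set.indicator_of_mem hω]
      exact le_of_not_gt hω
    · rw [Set.indicator_of_notMem hω]
      simp only [abs_zero]
      exact mul_nonneg hN.le (hw i hi).le
  have hVle : ∀ i, ∀ ω, |V i ω| ≤ |U i ω| := by
    intro i ω
    rw [hVeq i]
    by_cases hω : ω ∈ ({ω | N * w i < |U i ω|})ᶜ
    · rw [Set.indicator_of_mem hω]
    · rw [Set.indicator_of_notMem hω]; simp
  have hUV : ∀ i, (fun ω => U i ω - V i ω)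
      = Set.indicator {ω | N * w i < |U i ω|} (U i) := by
    intro i
    funext ω
    rw [hVeq i]
    by_cases hω : ω ∈ {ω | N * w i < |U i ω|}
    · rw [Set.indicator_of_mem hω, Set.indicator_of_notMem (by simpa using hω)]
      ring
    · rw [Set.indicator_of_notMem hω, Set.indicator_of_mem (by simpa using hω)]
      ring
  have hUVabs : ∀ i, (fun ω => |U i ω - V i ω|)
      = Set.indicator {ω | N * w i < |U i ω|} (fun ω => |U i ω|) := by
    intro i
    funext ω
    have := congrFun (hUV i) ω
    rw [this]
    by_cases hω : ω ∈ {ω | N * w i < |U i ω|}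
    · rw [Set.indicator_of_mem hω, Set.indicator_of_mem hω]
    · rw [Set.indicator_of_notMem hω, Set.indicator_of_notMem hω, abs_zero]
  have hUVint : ∀ i ∈ Finset.Icc 1 n, ∫ ω, |U i ω - V i ω| ∂P
      = ∫ ω in {ω | N * w i < |U i ω|}, |U i ω| ∂P := by
    intro i hi
    rw [hUVabs i, integral_indicator (hsmeas i)]
  have hVmem : ∀ i ∈ Finset.Icc 1 n, MemLp (V i) 2 P := by
    intro i hi
    apply MemLp.of_bound (hVmeas i).aestronglyMeasurable (N * w i)
    exact ae_of_all _ fun ω => by rw [Real.norm_eq_abs]; exact hVbd i hi ω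
  have hEU : ∀ i ∈ Finset.Icc 1 n, ∫ ω, |U i ω| ∂P ≤ (N₀ + 1) * w i := by
    intro i hi
    have := integral_abs_le_add P (U i) (hint i hi)
      (mul_nonneg hN₀.le (hw i hi).le) (hs0meas i) (htr2 i hi)
    linarith
  -- variance of truncated variables
  have hVvar : ∀ i ∈ Finset.Icc 1 n, variance (V i) P ≤ N * (N₀+1) * (w i)^2 := by
    intro i hi
    have h1 : variance (V i) P ≤ ∫ ω, (V i ω)^2 ∂P := by
      have := variance_le_expectation_sq (μ := P) (X := V i) (hVmeas i).aestronglyMeasurable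
      simpa using this
    have h2 : ∫ ω, (V i ω)^2 ∂P ≤ ∫ ω, (N * w i) * |U i ω| ∂P := by
      apply integral_mono (hVmem i hi).integrable_sq ((hint i hi).abs.const_mul _)
      intro ω
      have hb := hVbd i hi ω
      have hl := hVle i ω
      calc (V i ω)^2 = |V i ω| * |V i ω| := by rw [abs_mul_abs_self, sq]
        _ ≤ (N * w i) * |U i ω| := by
            apply mul_le_mul hb hl (abs_nonneg _) (mul_nonneg hN.le (hw i hi).le)
    have h3 : ∫ ω, (N * w i) * |U i ω| ∂P = (N * w i) * ∫ ω, |U i ω| ∂P :=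
      integral_const_mul _ _
    have h4 : (N * w i) * ∫ ω, |U i ω| ∂P ≤ (N * w i) * ((N₀+1) * w i) := by
      apply mul_le_mul_of_nonneg_left (hEU i hi) (mul_nonneg hN.le (hw i hi).le)
    calc variance (V i) P ≤ ∫ ω, (V i ω)^2 ∂P := h1
      _ ≤ (N * w i) * ∫ ω, |U i ω| ∂P := h3 ▸ h2
      _ ≤ (N * w i) * ((N₀+1) * w i) := h4
      _ = N * (N₀+1) * (w i)^2 := by ring
  -- sums
  set T : Ω → ℝ := ∑ i ∈ Finset.Icc 1 n, V i with hTdef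
  have hTapp : ∀ ω, T ω = ∑ i ∈ Finset.Icc 1 n, V i ω := by
    intro ω
    rw [hTdef, Finset.sum_apply]
  have hTmem : MemLp T 2 P := memLp_finset_sum' _ hVmem
  have hTint : Integrable T P := hTmem.integrable one_le_two
  have hTvar : variance T P ≤ (ηr/2) * ((ε/4) * W)^2 := by
    have hvs : variance T P = ∑ i ∈ Finset.Icc 1 n, variance (V i) P := by
      apply IndepFun.variance_sum hVmem
      intro i hi j hj hij
      rw [Finset.mem_coe] at hi hj
      exact (hpair i hi j hj hij).comp (hgmeas i) (hgmeas j)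
    rw [hvs]
    calc ∑ i ∈ Finset.Icc 1 n, variance (V i) P
        ≤ ∑ i ∈ Finset.Icc 1 n, N * (N₀+1) * (w i)^2 := Finset.sum_le_sum hVvar
      _ = N * (N₀+1) * ∑ i ∈ Finset.Icc 1 n, (w i)^2 := by rw [Finset.mul_sum]
      _ ≤ (ηr/2) * ((ε/4) * W)^2 := hW2
  set S : Ω → ℝ := fun ω => ∑ i ∈ Finset.Icc 1 n, U i ω with hSdef
  have hSint : Integrable S P := integrable_finset_sum _ hint
  have hSTint : Integrable (fun ω => S ω - T ω) P := hSint.sub hTint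
  have hSTabs : ∫ ω, |S ω - T ω| ∂P ≤ min (ε/8) ((ε/4)*(ηr/2)) * W := by
    have hpt : ∀ ω, |S ω - T ω| ≤ ∑ i ∈ Finset.Icc 1 n, |U i ω - V i ω| := by
      intro ω
      rw [hSdef, hTapp ω, ← Finset.sum_sub_distrib]
      exact Finset.abs_sum_le_sum_abs _ _
    have hintsum : Integrable (fun ω => ∑ i ∈ Finset.Icc 1 n, |U i ω - V i ω|) P := by
      apply integrable_finset_sum
      intro i hi
      exact ((hint i hi).sub (hVint i hi)).abs
    calc ∫ ω, |S ω - T ω| ∂P ≤ ∫ ω, ∑ i ∈ Finset.Icc 1 n, |U i ω - V i ω| ∂P :=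
          integral_mono hSTint.abs hintsum hpt
      _ = ∑ i ∈ Finset.Icc 1 n, ∫ ω, |U i ω - V i ω| ∂P :=
          integral_finset_sum _ (fun i hi => ((hint i hi).sub (hVint i hi)).abs)
      _ = ∑ i ∈ Finset.Icc 1 n, ∫ ω in {ω | N * w i < |U i ω|}, |U i ω| ∂P :=
          Finset.sum_congr rfl hUVint
      _ ≤ min (ε/8) ((ε/4)*(ηr/2)) * W := htr
  -- mean bounds
  have hES : ∫ ω, S ω ∂P = ∑ i ∈ Finset.Icc 1 n, ∫ ω, U i ω ∂P :=
    integral_finset_sum _ hint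
  have hET : ∫ ω, T ω ∂P = ∑ i ∈ Finset.Icc 1 n, ∫ ω, V i ω ∂P := by
    rw [hTdef]
    have := integral_finset_sum (μ := P) (Finset.Icc 1 n) hVint
    rw [← this]
    congr 1
    funext ω
    rw [Finset.sum_apply]
  have hVU : ∀ i ∈ Finset.Icc 1 n,
      |(∫ ω, V i ω ∂P) - ∫ ω, U i ω ∂P| ≤ ∫ ω, |U i ω - V i ω| ∂P := by
    intro i hi
    have h1 : (∫ ω, V i ω ∂P) - ∫ ω, U i ω ∂P = ∫ ω, (V i ω - U i ω) ∂P :=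
      (integral_sub (hVint i hi) (hint i hi)).symm
    rw [h1]
    have h2 := norm_integral_le_integral_norm (μ := P) (f := fun ω => V i ω - U i ω)
    rw [Real.norm_eq_abs] at h2
    calc |∫ ω, (V i ω - U i ω) ∂P| ≤ ∫ ω, ‖V i ω - U i ω‖ ∂P := h2
      _ = ∫ ω, |U i ω - V i ω| ∂P := by
          congr 1
          funext ω
          rw [Real.norm_eq_abs, abs_sub_comm]
  have hETES : |(∫ ω, T ω ∂P) - ∫ ω, S ω ∂P| ≤ min (ε/8) ((ε/4)*(ηr/2)) * W := by
    rw [hES, hET, ← Finset.sum_sub_distrib]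
    calc |∑ i ∈ Finset.Icc 1 n, ((∫ ω, V i ω ∂P) - ∫ ω, U i ω ∂P)|
        ≤ ∑ i ∈ Finset.Icc 1 n, |(∫ ω, V i ω ∂P) - ∫ ω, U i ω ∂P| :=
          Finset.abs_sum_le_sum_abs _ _
      _ ≤ ∑ i ∈ Finset.Icc 1 n, ∫ ω, |U i ω - V i ω| ∂P := Finset.sum_le_sum hVU
      _ = ∑ i ∈ Finset.Icc 1 n, ∫ ω in {ω | N * w i < |U i ω|}, |U i ω| ∂P :=
          Finset.sum_congr rfl hUVint
      _ ≤ min (ε/8) ((ε/4)*(ηr/2)) * W := htr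
  have hESl : |(∫ ω, S ω ∂P) - ℓ * W| ≤ (ε/4) * W := by
    rw [hES, hWdef, Finset.mul_sum, ← Finset.sum_sub_distrib]
    calc |∑ i ∈ Finset.Icc 1 n, ((∫ ω, U i ω ∂P) - ℓ * w i)|
        ≤ ∑ i ∈ Finset.Icc 1 n, |(∫ ω, U i ω ∂P) - ℓ * w i| :=
          Finset.abs_sum_le_sum_abs _ _
      _ ≤ (ε/4) * ∑ i ∈ Finset.Icc 1 n, w i := hmeansum
  -- the two bad events
  set B₁ : Set Ω := {ω | (ε/4) * W ≤ |S ω - T ω|} with hB₁def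
  set B₂ : Set Ω := {ω | (ε/4) * W ≤ |T ω - ∫ ω', T ω' ∂P|} with hB₂def
  have hmin18 : min (ε/8) ((ε/4)*(ηr/2)) ≤ ε/8 := min_le_left _ _
  have hmin2 : min (ε/8) ((ε/4)*(ηr/2)) ≤ (ε/4)*(ηr/2) := min_le_right _ _
  have hminnn : 0 ≤ min (ε/8) ((ε/4)*(ηr/2)) := le_min (by positivity) (by positivity)
  -- event inclusion
  have hincl : {ω | ε ≤ |S ω / W - ℓ|} ⊆ B₁ ∪ B₂ := by
    intro ω hω
    rw [Set.mem_setOf_eq] at hω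
    by_contra hB
    rw [Set.mem_union] at hB
    push_neg at hB
    obtain ⟨hB1, hB2⟩ := hB
    rw [hB₁def, Set.mem_setOf_eq, not_le] at hB1
    rw [hB₂def, Set.mem_setOf_eq, not_le] at hB2
    have habs : |S ω / W - ℓ| = |S ω - ℓ * W| / W := by
      rw [show S ω / W - ℓ = (S ω - ℓ * W)/W by field_simp, abs_div, abs_of_pos hWpos]
    have hεW : ε * W ≤ |S ω - ℓ * W| := by
      rw [habs] at hω
      rw [le_div_iff₀ hWpos] at hω
      linarith [hω]
    have hdecomp : |S ω - ℓ * W| ≤ |S ω - T ω| + |T ω - ∫ ω', T ω' ∂P|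
        + |(∫ ω', T ω' ∂P) - ∫ ω', S ω' ∂P| + |(∫ ω', S ω' ∂P) - ℓ * W| := by
      have h := abs_sub_abs_le_abs_sub (S ω - ℓ * W) 0
      calc |S ω - ℓ * W|
          = |(S ω - T ω) + ((T ω - ∫ ω', T ω' ∂P) + (((∫ ω', T ω' ∂P) - ∫ ω', S ω' ∂P)
              + ((∫ ω', S ω' ∂P) - ℓ * W)))| := by ring_nf
        _ ≤ _ := by
            calc _ ≤ |S ω - T ω| + |(T ω - ∫ ω', T ω' ∂P) + (((∫ ω', T ω' ∂P) - ∫ ω', S ω' ∂P)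
                + ((∫ ω', S ω' ∂P) - ℓ * W))| := abs_add_le _ _
              _ ≤ |S ω - T ω| + (|T ω - ∫ ω', T ω' ∂P| + |((∫ ω', T ω' ∂P) - ∫ ω', S ω' ∂P)
                + ((∫ ω', S ω' ∂P) - ℓ * W)|) := by
                  have := abs_add_le (T ω - ∫ ω', T ω' ∂P) (((∫ ω', T ω' ∂P) - ∫ ω', S ω' ∂P)
                    + ((∫ ω', S ω' ∂P) - ℓ * W))
                  linarith
              _ ≤ _ := by
                  have := abs_add_le ((∫ ω', T ω' ∂P) - ∫ ω', S ω' ∂P)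
                    ((∫ ω', S ω' ∂P) - ℓ * W)
                  linarith
    have hfin : |S ω - ℓ * W| < ε * W := by
      have h1 : |(∫ ω', T ω' ∂P) - ∫ ω', S ω' ∂P| ≤ (ε/8) * W := by
        calc |(∫ ω', T ω' ∂P) - ∫ ω', S ω' ∂P| ≤ min (ε/8) ((ε/4)*(ηr/2)) * W := hETES
          _ ≤ (ε/8) * W := mul_le_mul_of_nonneg_right hmin18 hWpos.le
      nlinarith [hESl, hB1, hB2, hWpos]
    linarith
  -- Markov bound for B₁
  have hTmeas : Measurable T := by
    have hTfun : T = fun ω => ∑ i ∈ Finset.Icc 1 n, V i ω := funext hTapp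
    rw [hTfun]
    exact Finset.measurable_sum _ (fun i _ => hVmeas i)
  have hB₁meas : MeasurableSet B₁ := by
    apply measurableSet_le measurable_const
    apply Measurable.abs
    exact (Finset.measurable_sum _ (fun i _ => hmeas i)).sub hTmeas
  have hPB₁ : P B₁ ≤ ENNReal.ofReal (ηr/2) := by
    have hmk := mul_meas_ge_le_integral_of_nonneg
      (ae_of_all P (fun ω => abs_nonneg (S ω - T ω))) hSTint.abs ((ε/4) * W)
    have hle : ((ε/4) * W) * (P B₁).toReal ≤ (ε/4)*(ηr/2) * W := by
      calc ((ε/4) * W) * (P B₁).toReal ≤ ∫ ω, |S ω - T ω| ∂P := hmk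
        _ ≤ min (ε/8) ((ε/4)*(ηr/2)) * W := hSTabs
        _ ≤ (ε/4)*(ηr/2) * W := mul_le_mul_of_nonneg_right hmin2 hWpos.le
    have htoReal : (P B₁).toReal ≤ ηr/2 := by
      have hpos : (0:ℝ) < (ε/4) * W := by positivity
      nlinarith [hle, hpos]
    calc P B₁ = ENNReal.ofReal ((P B₁).toReal) := (ENNReal.ofReal_toReal (measure_ne_top P _)).symm
      _ ≤ ENNReal.ofReal (ηr/2) := ENNReal.ofReal_le_ofReal htoReal
  -- Chebyshev for B₂
  have hPB₂ : P B₂ ≤ ENNReal.ofReal (ηr/2) := by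
    have hcheb := meas_ge_le_variance_div_sq (μ := P) hTmem
      (by positivity : (0:ℝ) < (ε/4) * W)
    have hdiv : variance T P / ((ε/4) * W)^2 ≤ ηr/2 := by
      rw [div_le_iff₀ (by positivity)]
      calc variance T P ≤ (ηr/2) * ((ε/4) * W)^2 := hTvar
        _ = ηr/2 * ((ε/4) * W)^2 := by ring
    calc P B₂ ≤ ENNReal.ofReal (variance T P / ((ε/4) * W)^2) := hcheb
      _ ≤ ENNReal.ofReal (ηr/2) := ENNReal.ofReal_le_ofReal hdiv
  -- combine
  calc P {ω | ε ≤ |(∑ i ∈ Finset.Icc 1 n, U i ω) / (∑ i ∈ Finset.Icc 1 n, w i) - ℓ|}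
      ≤ P (B₁ ∪ B₂) := measure_mono hincl
    _ ≤ P B₁ + P B₂ := measure_union_le _ _
    _ ≤ ENNReal.ofReal (ηr/2) + ENNReal.ofReal (ηr/2) := add_le_add hPB₁ hPB₂
    _ = ENNReal.ofReal ηr := by
        rw [← ENNReal.ofReal_add (by positivity) (by positivity)]
        norm_num

end

theorem stmt_8 {lam β κ₁ κ₂ : ℝ} (hlam : lam < 1/2) (hβ : 0 < β)
    (p : ℕ → ℕ → ℝ) (hz : IsZipfArray p κ₁ κ₂)
    {Ω : Type*} [MeasurableSpace Ω] (P : Measure Ω) [IsProbabilityMeasure P]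
    (U : ℕ → ℕ → Ω → ℝ)
    (hmeas : ∀ i n, Measurable (U i n))
    (hint : ∀ n : ℕ, 2 ≤ n → ∀ i : ℕ, 1 ≤ i → i ≤ n → Integrable (U i n) P)
    (hindep : ∀ n : ℕ, 2 ≤ n →
      iIndepFun
        (fun i : Fin n => U (i.1 + 1) n) P)
    (hUI : ∀ ε : ℝ, 0 < ε → ∃ N : ℝ, 0 < N ∧ ∀ n : ℕ, 2 ≤ n → ∀ i : ℕ, 1 ≤ i → i ≤ n →
      ∫ ω in {ω | N * phiW lam β (p i n) n < |U i n ω|}, |U i n ω| ∂P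
        ≤ ε * phiW lam β (p i n) n)
    (ℓ : ℝ)
    (hmean : ∀ ε : ℝ, 0 < ε → ∃ δ : ℝ, 0 < δ ∧ ∀ n : ℕ, 2 ≤ n → ∀ i : ℕ, 1 ≤ i → i ≤ n →
      (n : ℝ) * p i n ≤ δ →
      |(∫ ω, U i n ω ∂P) / phiW lam β (p i n) n - ℓ| ≤ ε) :
    TendstoInMeasure P
      (fun n ω => (∑ i ∈ Finset.Icc 1 n, U i n ω)
        / (∑ i ∈ Finset.Icc 1 n, phiW lam β (p i n) n))
      atTop (fun _ => ℓ) := by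
  rw [tendstoInMeasure_iff_dist]
  intro ε hε
  rw [ENNReal.tendsto_atTop_zero]
  intro η hη
  set ηr : ℝ := (min 1 η).toReal with hηrdef
  have hmin_ne_top : min 1 η ≠ ⊤ := ne_top_of_le_ne_top (by norm_num) (min_le_left _ _)
  have hmin0 : 0 < min 1 η := lt_min one_pos hη
  have hηr : 0 < ηr := ENNReal.toReal_pos hmin0.ne' hmin_ne_top
  have hofReal : ENNReal.ofReal ηr ≤ η := by
    rw [hηrdef, ENNReal.ofReal_toReal hmin_ne_top]
    exact min_le_right _ _
  obtain ⟨N₀, hN₀, hUI₀⟩ := hUI 1 one_pos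
  obtain ⟨δ, hδ, hmeanδ⟩ := hmean (ε/8) (by positivity)
  set ε' : ℝ := min (ε/8) ((ε/4)*(ηr/2)) with hε'def
  have hε'pos : 0 < ε' := lt_min (by positivity) (by positivity)
  obtain ⟨N, hN, hUIN⟩ := hUI ε' hε'pos
  set C₀ : ℝ := N₀ + 1 + |ℓ| with hC₀def
  have hC₀ : 0 < C₀ := by positivity
  have hhead := head_small hlam hβ hz ((ε/8)/C₀) (by positivity) δ hδ
  have hsq := sq_small hlam hβ hz ((ηr/2)*(ε/4)^2/(N*(N₀+1))) (by positivity)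
  have hev := hhead.and (hsq.and (eventually_ge_atTop 2))
  rw [eventually_atTop] at hev
  obtain ⟨n₀, hn₀⟩ := hev
  refine ⟨n₀, fun n hn => ?_⟩
  obtain ⟨hheadn, hsqn, hn2⟩ := hn₀ n hn
  set w : ℕ → ℝ := fun i => phiW lam β (p i n) n with hwdef
  have hn0 : (0:ℝ) < (n:ℝ) := by positivity
  have hw : ∀ i ∈ Finset.Icc 1 n, 0 < w i := by
    intro i hi
    rw [Finset.mem_Icc] at hi
    exact phiW_pos (hz.2.2 n hn2 i hi.1 hi.2).1 hβ hn0
  set W : ℝ := ∑ i ∈ Finset.Icc 1 n, w i with hWdef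
  -- pairwise independence
  have hpair : ∀ i ∈ Finset.Icc 1 n, ∀ j ∈ Finset.Icc 1 n, i ≠ j →
      IndepFun (U i n) (U j n) P := by
    intro i hi j hj hij
    rw [Finset.mem_Icc] at hi hj
    have hia : i - 1 < n := by omega
    have hja : j - 1 < n := by omega
    have hne : (⟨i-1, hia⟩ : Fin n) ≠ (⟨j-1, hja⟩ : Fin n) := by
      intro h
      apply hij
      have := Fin.mk.inj_iff.1 h
      omega
    have := (hindep n hn2).indepFun hne
    simp only [show i - 1 + 1 = i by omega, show j - 1 + 1 = j by omega] at this
    exact this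
  -- mean sum bound
  have hEUabs : ∀ i ∈ Finset.Icc 1 n, |∫ ω, U i n ω ∂P| ≤ (N₀ + 1) * w i := by
    intro i hi
    rw [Finset.mem_Icc] at hi
    have h1 : ∫ ω, |U i n ω| ∂P ≤ N₀ * w i + 1 * w i := by
      apply integral_abs_le_add P (U i n) (hint n hn2 i hi.1 hi.2)
        (mul_nonneg hN₀.le (hw i (Finset.mem_Icc.2 hi)).le)
        (measurableSet_lt measurable_const (hmeas i n).abs)
        (hUI₀ n hn2 i hi.1 hi.2)
    have h2 : |∫ ω, U i n ω ∂P| ≤ ∫ ω, |U i n ω| ∂P := by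
      have := norm_integral_le_integral_norm (μ := P) (f := U i n)
      simpa [Real.norm_eq_abs] using this
    linarith
  have hmeansum : ∑ i ∈ Finset.Icc 1 n, |(∫ ω, U i n ω ∂P) - ℓ * w i| ≤ (ε/4) * W := by
    rw [← Finset.sum_filter_add_sum_filter_not (Finset.Icc 1 n)
      (fun i => δ < (n:ℝ) * p i n)]
    have hb1 : ∑ i ∈ (Finset.Icc 1 n).filter (fun i => δ < (n:ℝ) * p i n),
        |(∫ ω, U i n ω ∂P) - ℓ * w i| ≤ (ε/8) * W := by
      have hper : ∀ i ∈ (Finset.Icc 1 n).filter (fun i => δ < (n:ℝ) * p i n),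
          |(∫ ω, U i n ω ∂P) - ℓ * w i| ≤ C₀ * w i := by
        intro i hi
        rw [Finset.mem_filter] at hi
        have h1 := hEUabs i hi.1
        have h2 : |ℓ * w i| = |ℓ| * w i := by
          rw [abs_mul, abs_of_pos (hw i hi.1)]
        calc |(∫ ω, U i n ω ∂P) - ℓ * w i| ≤ |∫ ω, U i n ω ∂P| + |ℓ * w i| := abs_sub _ _
          _ ≤ (N₀ + 1) * w i + |ℓ| * w i := by rw [h2]; linarith
          _ = C₀ * w i := by rw [hC₀def]; ring
      calc ∑ i ∈ (Finset.Icc 1 n).filter (fun i => δ < (n:ℝ) * p i n),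
            |(∫ ω, U i n ω ∂P) - ℓ * w i|
          ≤ ∑ i ∈ (Finset.Icc 1 n).filter (fun i => δ < (n:ℝ) * p i n), C₀ * w i :=
            Finset.sum_le_sum hper
        _ = C₀ * ∑ i ∈ (Finset.Icc 1 n).filter (fun i => δ < (n:ℝ) * p i n), w i := by
            rw [Finset.mul_sum]
        _ ≤ C₀ * (((ε/8)/C₀) * W) := by
            apply mul_le_mul_of_nonneg_left _ hC₀.le
            exact hheadn
        _ = (ε/8) * W := by field_simp
    have hb2 : ∑ i ∈ (Finset.Icc 1 n).filter (fun i => ¬(δ < (n:ℝ) * p i n)),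
        |(∫ ω, U i n ω ∂P) - ℓ * w i| ≤ (ε/8) * W := by
      have hper : ∀ i ∈ (Finset.Icc 1 n).filter (fun i => ¬(δ < (n:ℝ) * p i n)),
          |(∫ ω, U i n ω ∂P) - ℓ * w i| ≤ (ε/8) * w i := by
        intro i hi
        rw [Finset.mem_filter, not_lt] at hi
        obtain ⟨hi1, hile⟩ := hi
        rw [Finset.mem_Icc] at hi1
        have hm := hmeanδ n hn2 i hi1.1 hi1.2 hile
        have hwi := hw i (Finset.mem_Icc.2 hi1)
        have heq : (∫ ω, U i n ω ∂P) - ℓ * w i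
            = w i * ((∫ ω, U i n ω ∂P) / w i - ℓ) := by
          field_simp
        rw [heq, abs_mul, abs_of_pos hwi]
        calc w i * |(∫ ω, U i n ω ∂P) / w i - ℓ| ≤ w i * (ε/8) :=
              mul_le_mul_of_nonneg_left hm hwi.le
          _ = (ε/8) * w i := by ring
      calc ∑ i ∈ (Finset.Icc 1 n).filter (fun i => ¬(δ < (n:ℝ) * p i n)),
            |(∫ ω, U i n ω ∂P) - ℓ * w i|
          ≤ ∑ i ∈ (Finset.Icc 1 n).filter (fun i => ¬(δ < (n:ℝ) * p i n)), (ε/8) * w i :=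
            Finset.sum_le_sum hper
        _ = (ε/8) * ∑ i ∈ (Finset.Icc 1 n).filter (fun i => ¬(δ < (n:ℝ) * p i n)), w i := by
            rw [Finset.mul_sum]
        _ ≤ (ε/8) * W := by
            apply mul_le_mul_of_nonneg_left _ (by positivity)
            apply Finset.sum_le_sum_of_subset_of_nonneg (Finset.filter_subset _ _)
            intro i hi _
            exact (hw i hi).le
    linarith
  -- truncation sum bounds
  have htr : ∑ i ∈ Finset.Icc 1 n, ∫ ω in {ω | N * w i < |U i n ω|}, |U i n ω| ∂P
      ≤ ε' * W := by
    rw [hWdef, Finset.mul_sum]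
    apply Finset.sum_le_sum
    intro i hi
    rw [Finset.mem_Icc] at hi
    exact hUIN n hn2 i hi.1 hi.2
  have htr2 : ∀ i ∈ Finset.Icc 1 n,
      ∫ ω in {ω | N₀ * w i < |U i n ω|}, |U i n ω| ∂P ≤ w i := by
    intro i hi
    rw [Finset.mem_Icc] at hi
    have := hUI₀ n hn2 i hi.1 hi.2
    rw [one_mul] at this
    exact this
  -- variance sum bound
  have hW2 : N * (N₀+1) * ∑ i ∈ Finset.Icc 1 n, (w i)^2 ≤ (ηr/2) * ((ε/4) * W)^2 := by
    have hNN : (0:ℝ) < N * (N₀+1) := by positivity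
    calc N * (N₀+1) * ∑ i ∈ Finset.Icc 1 n, (w i)^2
        ≤ N * (N₀+1) * (((ηr/2)*(ε/4)^2/(N*(N₀+1))) * W^2) := by
          apply mul_le_mul_of_nonneg_left hsqn hNN.le
      _ = (ηr/2) * ((ε/4) * W)^2 := by field_simp; try ring
  -- apply core bound
  have hcore := core_bound P n hn2 (fun i => U i n) w N N₀ ε ηr ℓ hε hηr hN hN₀ hw
    (fun i => hmeas i n)
    (fun i hi => by rw [Finset.mem_Icc] at hi; exact hint n hn2 i hi.1 hi.2)
    hpair htr2 hW2 htr hmeansum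
  calc P {ω | ε ≤ dist ((∑ i ∈ Finset.Icc 1 n, U i n ω)
        / (∑ i ∈ Finset.Icc 1 n, phiW lam β (p i n) n)) ℓ}
      = P {ω | ε ≤ |(∑ i ∈ Finset.Icc 1 n, U i n ω) / (∑ i ∈ Finset.Icc 1 n, w i) - ℓ|} := by
        congr 1
    _ ≤ ENNReal.ofReal ηr := hcore
    _ ≤ η := hofReal
end
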